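/- arXiv:0705.3599 — 13 statements merged into one kernel-verified Lean document; each statement's English description precedes it below -/
import Mathlib

section
/- Let A be a 3×3 integer symmetric matrix with A₁₁ = A₂₂ = 0 and A₁₂ = 2, and suppose A is cyclotomic. Then A₁₃ = A₂₃ = 0. (Consequently the 2×2 matrix [[0,2],[2,0]] is a maximal indecomposable cyclotomic matrix: it cannot be extended to a strictly larger indecomposable cyclotomic matrix.) -/
open Matrix

/-- An integer symmetric matrix is cyclotomic if all its real eigenvalues lie in `[-2,2]`. -/
def IsCyclo {n : ℕ} (A : Matrix (Fin n) (Fin n) ℤ) : Prop :=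
  ∀ μ ∈ spectrum ℝ (A.map ((↑) : ℤ → ℝ)), |μ| ≤ 2

lemma det_nonneg_of_spectrum_nonneg {m : ℕ} {M : Matrix (Fin m) (Fin m) ℝ}
    (hM : M.IsHermitian) (h : ∀ μ ∈ spectrum ℝ M, 0 ≤ μ) : 0 ≤ M.det := by
  rw [hM.det_eq_prod_eigenvalues]
  exact Finset.prod_nonneg fun i _ => h _ (hM.eigenvalues_mem_spectrum_real i)

/-- If a `3×3` cyclotomic integer symmetric matrix has
`A₁₁ = A₂₂ = 0` and `A₁₂ = 2`, then `A₁₃ = A₂₃ = 0`. -/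
theorem extend_0220_forces_zeros
    (A : Matrix (Fin 3) (Fin 3) ℤ) (hsymm : A.IsSymm)
    (h00 : A 0 0 = 0) (h11 : A 1 1 = 0) (h01 : A 0 1 = 2)
    (hcyc : IsCyclo A) :
    A 0 2 = 0 ∧ A 1 2 = 0 := by
  set B : Matrix (Fin 3) (Fin 3) ℝ := A.map ((↑) : ℤ → ℝ) with hBdef
  have h10 : A 1 0 = 2 := by rw [hsymm.apply, h01]
  have h20 : A 2 0 = A 0 2 := hsymm.apply 0 2
  have h21 : A 2 1 = A 1 2 := hsymm.apply 1 2
  -- the two shifted matrices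
  set C : Matrix (Fin 3) (Fin 3) ℝ := algebraMap ℝ _ 2 - B with hCdef
  set D : Matrix (Fin 3) (Fin 3) ℝ := B - algebraMap ℝ _ (-2) with hDdef
  have hBherm : B.IsHermitian := by
    show Bᴴ = B
    ext i j
    simp [hBdef, Matrix.conjTranspose_apply, hsymm.apply]
  have hCherm : C.IsHermitian := by
    show Cᴴ = C
    rw [hCdef, Matrix.conjTranspose_sub, hBherm]
    congr 1
    ext i j
    simp [Matrix.algebraMap_matrix_apply, Matrix.conjTranspose_apply]
    split <;> simp_all [eq_comm]
  have hDherm : D.IsHermitian := by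
    show Dᴴ = D
    rw [hDdef, Matrix.conjTranspose_sub, hBherm]
    congr 1
    ext i j
    simp [Matrix.algebraMap_matrix_apply, Matrix.conjTranspose_apply]
    split <;> simp_all [eq_comm]
  have hCspec : ∀ ν ∈ spectrum ℝ C, 0 ≤ ν := by
    intro ν hν
    rw [hCdef, ← spectrum.singleton_sub_eq] at hν
    rw [Set.mem_sub] at hν
    obtain ⟨x, hx, μ, hμ, hxy⟩ := hν
    rw [Set.mem_singleton_iff] at hx
    subst hx
    have := hcyc μ hμ
    have := abs_le.mp this
    linarith [hxy, this.2]
  have hDspec : ∀ ν ∈ spectrum ℝ D, 0 ≤ ν := by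
    intro ν hν
    rw [hDdef, ← spectrum.sub_singleton_eq] at hν
    rw [Set.mem_sub] at hν
    obtain ⟨μ, hμ, x, hx, hxy⟩ := hν
    rw [Set.mem_singleton_iff] at hx
    subst hx
    have := abs_le.mp (hcyc μ hμ)
    linarith [hxy, this.1]
  have hCdet : 0 ≤ C.det := det_nonneg_of_spectrum_nonneg hCherm hCspec
  have hDdet : 0 ≤ D.det := det_nonneg_of_spectrum_nonneg hDherm hDspec
  set a : ℝ := (A 0 2 : ℝ) with ha
  set b : ℝ := (A 1 2 : ℝ) with hb
  set c : ℝ := (A 2 2 : ℝ) with hc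
  have hCval : C.det = -2 * (a + b) ^ 2 := by
    rw [Matrix.det_fin_three]
    simp [hCdef, hBdef, Matrix.sub_apply, Matrix.map_apply, Matrix.algebraMap_matrix_apply,
      h00, h11, h01, h10, h20, h21, ← ha, ← hb, ← hc]
    ring
  have hDval : D.det = -2 * (a - b) ^ 2 := by
    rw [Matrix.det_fin_three]
    simp [hDdef, hBdef, Matrix.sub_apply, Matrix.map_apply, Matrix.algebraMap_matrix_apply,
      h00, h11, h01, h10, h20, h21, ← ha, ← hb, ← hc]
    ring
  have h1 : (a + b) ^ 2 ≤ 0 := by rw [hCval] at hCdet; linarith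
  have h2 : (a - b) ^ 2 ≤ 0 := by rw [hDval] at hDdet; linarith
  have h1' : a + b = 0 := by nlinarith [sq_nonneg (a + b)]
  have h2' : a - b = 0 := by nlinarith [sq_nonneg (a - b)]
  have hA02 : a = 0 := by linarith
  have hA12 : b = 0 := by linarith
  rw [ha] at hA02
  rw [hb] at hA12
  constructor
  · exact_mod_cast hA02
  · exact_mod_cast hA12
end

section
/- Let A be an n×n indecomposable cyclotomic integer symmetric matrix. Then one of the following holds: (a) every entry of A has absolute value at most 1; (b) n = 1 and A = (2) or A = (−2); (c) n = 2 and A is equivalent to [[0,2],[2,0]]. In other words, apart from matrices equivalent to (2) or [[0,2],[2,0]], every indecomposable cyclotomic matrix is the adjacency matrix of a cyclotomic charged signed graph. -/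
open Matrix

/-- Two integer symmetric matrices are equivalent if `A = s • (P * B * Pᵀ)` for some
sign `s ∈ {1,-1}` and signed permutation matrix `P` (an integer matrix with `P * Pᵀ = 1`). -/
def MEquiv {n : ℕ} (A B : Matrix (Fin n) (Fin n) ℤ) : Prop :=
  ∃ (s : ℤ) (P : Matrix (Fin n) (Fin n) ℤ),
    (s = 1 ∨ s = -1) ∧ P * Pᵀ = 1 ∧ A = s • (P * B * Pᵀ)

lemma row_sum_sq_le {n : ℕ} {A : Matrix (Fin n) (Fin n) ℤ} (hsymm : A.IsSymm)
    (hcyc : IsCyclo A) (i : Fin n) :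
    ∑ j, (A i j)^2 ≤ 4 := by
  set B : Matrix (Fin n) (Fin n) ℝ := A.map ((↑) : ℤ → ℝ) with hBdef
  have hB : B.IsHermitian := by
    rw [Matrix.IsHermitian, conjTranspose_eq_transpose_of_trivial, hBdef,
      ← Matrix.transpose_map, hsymm]
  set U : Matrix (Fin n) (Fin n) ℝ := (hB.eigenvectorUnitary : Matrix (Fin n) (Fin n) ℝ) with hUdef
  have hUU : U * star U = 1 := hB.eigenvectorUnitary.2.2
  have hsUU : star U * U = 1 := Matrix.UnitaryGroup.star_mul_self _
  have hspec := hB.spectral_theorem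
  rw [Unitary.conjStarAlgAut_apply, ← hUdef] at hspec
  have hsq : B * B = U * Matrix.diagonal (fun k => (hB.eigenvalues k)^2) * star U := by
    conv_lhs => rw [hspec]
    have : (RCLike.ofReal ∘ hB.eigenvalues : Fin n → ℝ) = hB.eigenvalues := by
      ext k; simp
    rw [this]
    rw [Matrix.mul_assoc (U * diagonal hB.eigenvalues) (star U),
      ← Matrix.mul_assoc (star U) (U * diagonal hB.eigenvalues) (star U),
      ← Matrix.mul_assoc (star U) U (diagonal hB.eigenvalues),
      hsUU, Matrix.one_mul, ← Matrix.mul_assoc,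
      Matrix.mul_assoc U (diagonal hB.eigenvalues) (diagonal hB.eigenvalues),
      Matrix.diagonal_mul_diagonal]
    have h2 : (fun k => hB.eigenvalues k * hB.eigenvalues k) = fun k => (hB.eigenvalues k)^2 := by
      ext k; ring
    rw [h2]
  have hval : ∀ k, (hB.eigenvalues k)^2 ≤ 4 := by
    intro k
    have := hcyc _ (hB.eigenvalues_mem_spectrum_real k)
    nlinarith [abs_nonneg (hB.eigenvalues k), sq_abs (hB.eigenvalues k),
      sq_nonneg (|hB.eigenvalues k| - 2)]
  have hdiag : (B * B) i i = ∑ k, (hB.eigenvalues k)^2 * (U i k)^2 := by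
    rw [hsq, Matrix.mul_apply]
    refine Finset.sum_congr rfl fun k _ => ?_
    rw [Matrix.mul_apply, Finset.sum_eq_single k (by
      intro b _ hb; simp [Matrix.diagonal_apply_ne _ hb]) (by simp)]
    simp [Matrix.diagonal_apply_eq, Matrix.star_apply]
    ring
  have hnorm : ∑ k, (U i k)^2 = 1 := by
    have := congrArg (fun M => M i i) hUU
    simp only [Matrix.mul_apply, Matrix.one_apply_eq, Matrix.star_apply, star_trivial] at this
    rw [← this]
    exact Finset.sum_congr rfl fun k _ => (sq (U i k)).symm ▸ by ring
  have hBB : (B * B) i i = ∑ j, ((A i j : ℝ))^2 := by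
    rw [Matrix.mul_apply]
    refine Finset.sum_congr rfl fun j _ => ?_
    have : B j i = B i j := by
      have := congrFun (congrFun hB.eq i) j
      simpa [Matrix.conjTranspose_apply] using this
    rw [this, hBdef]
    simp [Matrix.map_apply, sq]
  have hle : (B * B) i i ≤ 4 := by
    rw [hdiag]
    calc ∑ k, (hB.eigenvalues k)^2 * (U i k)^2
        ≤ ∑ k, 4 * (U i k)^2 :=
          Finset.sum_le_sum fun k _ => by nlinarith [sq_nonneg (U i k), hval k]
      _ = 4 := by rw [← Finset.mul_sum, hnorm]; ring
  rw [hBB] at hle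
  have : ((∑ j, (A i j)^2 : ℤ) : ℝ) ≤ 4 := by push_cast; exact hle
  exact_mod_cast this

lemma big_entry {n : ℕ} {A : Matrix (Fin n) (Fin n) ℤ} {i j : Fin n}
    (hrow : ∑ k, (A i k)^2 ≤ 4) (h : 2 ≤ |A i j|) :
    (A i j = 2 ∨ A i j = -2) ∧ ∀ k, k ≠ j → A i k = 0 := by
  have h4 : 4 ≤ (A i j)^2 := by
    have : (2:ℤ)^2 ≤ |A i j|^2 := pow_le_pow_left₀ (by norm_num) h 2
    simpa [sq_abs] using this
  have hsplit : (A i j)^2 + ∑ k ∈ Finset.univ.erase j, (A i k)^2 = ∑ k, (A i k)^2 :=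
    Finset.add_sum_erase Finset.univ (fun k => (A i k)^2) (Finset.mem_univ j)
  have hrest : ∑ k ∈ Finset.univ.erase j, (A i k)^2 ≤ 0 := by omega
  have hzero : ∀ k ∈ Finset.univ.erase j, (A i k)^2 = 0 := by
    have hnn : ∀ k ∈ Finset.univ.erase j, 0 ≤ (A i k)^2 := fun k _ => sq_nonneg _
    have := Finset.sum_eq_zero_iff_of_nonneg hnn
    exact this.mp (le_antisymm hrest (Finset.sum_nonneg hnn))
  constructor
  · have h4' : (A i j)^2 ≤ 4 := by
      have : ∑ k ∈ Finset.univ.erase j, (A i k)^2 = 0 := Finset.sum_eq_zero hzero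
      omega
    have hs4 : (A i j)^2 = 4 := le_antisymm h4' h4
    have hfac : (A i j - 2) * (A i j + 2) = 0 := by nlinarith
    rcases mul_eq_zero.mp hfac with h1 | h1
    · left; omega
    · right; omega
  · intro k hk
    have := hzero k (Finset.mem_erase.mpr ⟨hk, Finset.mem_univ k⟩)
    exact pow_eq_zero_iff (by norm_num) |>.mp this

lemma walk_closed {V : Type*} {G : SimpleGraph V} {S : Set V}
    (hS : ∀ v w, v ∈ S → G.Adj v w → w ∈ S) :
    ∀ {u v}, G.Walk u v → u ∈ S → v ∈ S := by
  intro u v w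
  induction w with
  | nil => exact id
  | cons h p ih => exact fun hu => ih (hS _ _ hu h)

/-- An indecomposable cyclotomic integer symmetric matrix either has
all entries of absolute value at most `1`, or is the `1×1` matrix `(2)` or `(-2)`,
or is (after a bijective relabelling of indices) equivalent to `[[0,2],[2,0]]`. -/
theorem indecomposable_cyclotomic_entries_small_or_exceptional
    {n : ℕ} (A : Matrix (Fin n) (Fin n) ℤ) (hsymm : A.IsSymm)
    (hconn : (SimpleGraph.fromRel (fun i j => A i j ≠ 0)).Connected)
    (hcyc : IsCyclo A) :
    (∀ i j, |A i j| ≤ 1)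
    ∨ (∃ e : Fin n ≃ Fin 1, Matrix.reindex e e A = !![2] ∨ Matrix.reindex e e A = !![-2])
    ∨ (∃ e : Fin n ≃ Fin 2, MEquiv (Matrix.reindex e e A) !![0,2;2,0]) := by
  set G := SimpleGraph.fromRel (fun i j : Fin n => A i j ≠ 0) with hG
  have hsym' : ∀ a b : Fin n, A a b = A b a := fun a b => by
    have := congrFun (congrFun hsymm b) a
    simpa [Matrix.transpose_apply] using this
  by_cases hsmall : ∀ i j, |A i j| ≤ 1
  · exact Or.inl hsmall
  push_neg at hsmall
  obtain ⟨i, j, hij⟩ := hsmall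
  have hij2 : 2 ≤ |A i j| := by omega
  obtain ⟨hval, hrowi⟩ := big_entry (row_sum_sq_le hsymm hcyc i) hij2
  by_cases hd : j = i
  · -- diagonal case
    subst hd
    -- vertex j is isolated
    have hiso : ∀ w, ¬ G.Adj j w := by
      intro w hw
      rw [hG, SimpleGraph.fromRel_adj] at hw
      obtain ⟨hne, hor⟩ := hw
      rcases hor with h | h
      · exact h (hrowi w (fun hwj => hne hwj.symm))
      · exact h (by rw [hsym' w j]; exact hrowi w (fun hwj => hne hwj.symm))
    have key : ∀ k : Fin n, k = j := by
      intro k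
      obtain ⟨w⟩ := hconn.preconnected j k
      have := walk_closed (G := G) (S := {j}) (fun v w hv hvw => by
        exfalso; exact hiso w (hv ▸ hvw)) w rfl
      exact this.symm ▸ rfl
    have hn1 : n = 1 := by
      have := Fintype.card_eq_one_iff.mpr ⟨j, key⟩
      simpa using this
    subst hn1
    refine Or.inr (Or.inl ⟨Equiv.refl _, ?_⟩)
    have h00 : A 0 0 = 2 ∨ A 0 0 = -2 := by
      have hj0 : j = (0 : Fin 1) := Subsingleton.elim _ _
      rw [← hj0]; exact hval
    rcases h00 with h | h
    · left; ext a b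
      fin_cases a; fin_cases b
      simpa [Matrix.reindex_apply] using h
    · right; ext a b
      fin_cases a; fin_cases b
      simpa [Matrix.reindex_apply] using h
  · -- off-diagonal case
    have hji2 : 2 ≤ |A j i| := by rw [hsym' j i]; exact hij2
    obtain ⟨hvalj, hrowj⟩ := big_entry (row_sum_sq_le hsymm hcyc j) hji2
    have hAii : A i i = 0 := hrowi i (fun h => hd h.symm)
    have hAjj : A j j = 0 := hrowj j hd
    have hadj : ∀ v w : Fin n, (v = i ∨ v = j) → G.Adj v w → (w = i ∨ w = j) := by
      intro v w hv hvw
      rw [hG, SimpleGraph.fromRel_adj] at hvw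
      obtain ⟨hne, hor⟩ := hvw
      have hor' : A v w ≠ 0 := by
        rcases hor with h | h
        · exact h
        · rw [hsym' v w]; exact h
      rcases hv with rfl | rfl
      · right; by_contra hwj; exact hor' (hrowi w hwj)
      · left; by_contra hwi; exact hor' (hrowj w hwi)
    have key : ∀ k : Fin n, k = i ∨ k = j := by
      intro k
      obtain ⟨w⟩ := hconn.preconnected i k
      exact walk_closed (G := G) (S := {v | v = i ∨ v = j})
        (fun v w hv hvw => hadj v w hv hvw) w (Or.inl rfl)
    have hji : j ≠ i := hd
    have hL : Function.LeftInverse (![i, j]) (fun k => if k = i then (0 : Fin 2) else 1) := by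
      intro k
      rcases key k with rfl | rfl
      · simp
      · simp [hji]
    have hR : Function.RightInverse (![i, j]) (fun k => if k = i then (0 : Fin 2) else 1) := by
      intro m
      fin_cases m
      · simp
      · simp [hji]
    set e : Fin n ≃ Fin 2 := ⟨fun k => if k = i then (0 : Fin 2) else 1, ![i, j], hL, hR⟩ with he
    refine Or.inr (Or.inr ⟨e, ?_⟩)
    have hMe : Matrix.reindex e e A = !![A i i, A i j; A j i, A j j] := by
      ext p q
      fin_cases p <;> fin_cases q <;>
        simp [Matrix.reindex_apply, Matrix.submatrix_apply, he, Equiv.coe_fn_symm_mk]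
    rcases hval with ha | ha
    · refine ⟨1, 1, Or.inl rfl, by simp, ?_⟩
      rw [hMe, hAii, hAjj, ha, hsym' j i, ha]
      simp
    · refine ⟨-1, 1, Or.inr rfl, by simp, ?_⟩
      rw [hMe, hAii, hAjj, ha, hsym' j i, ha]
      ext p q
      fin_cases p <;> fin_cases q <;> simp
end

section
/- Let A be a cyclotomic signed graph (an integer symmetric matrix with zero diagonal, all entries in {-1,0,1}, and all eigenvalues in [-2,2]) containing a triangle on distinct vertices v, w, x: A v w ≠ 0, A w x ≠ 0, A v x ≠ 0. If z is a fourth vertex (distinct from v, w, x), then the number of elements of {v, w, x} adjacent to z is even (i.e. 0 or 2). -/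
open Matrix Pointwise

lemma quad_calc {n : ℕ} (D : Matrix (Fin n) (Fin n) ℤ) (v w x : Fin n) (ew ex : ℤ) :
    (Pi.single v 1 + Pi.single w ew + Pi.single x ex) ⬝ᵥ
      (D *ᵥ (Pi.single v (1:ℤ) + Pi.single w ew + Pi.single x ex)) =
    (D v v + D v w * ew + D v x * ex)
      + ew * (D w v + D w w * ew + D w x * ex)
      + ex * (D x v + D x w * ew + D x x * ex) := by
  simp [mulVec_add, mulVec_single, add_dotProduct, single_dotProduct, Pi.add_apply]
  ring

lemma row_calc {n : ℕ} (D : Matrix (Fin n) (Fin n) ℤ) (v w x z : Fin n) (ew ex : ℤ) :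
    (D *ᵥ (Pi.single v (1:ℤ) + Pi.single w ew + Pi.single x ex)) z =
    D z v + D z w * ew + D z x * ex := by
  simp [mulVec_add, mulVec_single, Pi.add_apply]
  ring

lemma norm_calc {n : ℕ} (v w x : Fin n) (hvw : v ≠ w) (hvx : v ≠ x) (hwx : w ≠ x) (ew ex : ℤ) :
    (Pi.single v 1 + Pi.single w ew + Pi.single x ex) ⬝ᵥ
      (Pi.single v (1:ℤ) + Pi.single w ew + Pi.single x ex) = 1 + ew * ew + ex * ex := by
  simp [add_dotProduct, single_dotProduct, Pi.add_apply, Pi.single_apply,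
    hvw, hvx, hwx, hvw.symm, hvx.symm, hwx.symm]

lemma parity_helper {p ew ex a b c : ℤ}
    (hp : p = 1 ∨ p = -1) (hew : ew = 1 ∨ ew = -1) (hex : ex = 1 ∨ ex = -1)
    (ha : a = -1 ∨ a = 0 ∨ a = 1) (hb : b = -1 ∨ b = 0 ∨ b = 1)
    (hc : c = -1 ∨ c = 0 ∨ c = 1)
    (h : p * a + p * b * ew + p * c * ex = 0) :
    Even (((if a ≠ 0 then 1 else 0) + ((if b ≠ 0 then 1 else 0) + (if c ≠ 0 then 1 else 0))) : ℕ) := by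
  rcases hp with rfl | rfl <;> rcases hew with rfl | rfl <;> rcases hex with rfl | rfl <;>
    rcases ha with rfl | rfl | rfl <;> rcases hb with rfl | rfl | rfl <;>
    rcases hc with rfl | rfl | rfl <;>
    first
      | (exfalso; omega)
      | decide

lemma mulVec_eq_of_quad {n : ℕ} (C : Matrix (Fin n) (Fin n) ℝ) (hC : C.IsHermitian)
    (hspec : ∀ μ ∈ spectrum ℝ C, |μ| ≤ 2) (u : Fin n → ℝ)
    (hu : u ⬝ᵥ C *ᵥ u = 2 * (u ⬝ᵥ u)) :
    C *ᵥ u = fun i => 2 * u i := by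
  set M : Matrix (Fin n) (Fin n) ℝ := (2 : ℝ) • 1 - C with hMdef
  have hM : M.IsHermitian := by
    rw [Matrix.IsHermitian, hMdef, conjTranspose_sub, conjTranspose_smul,
      conjTranspose_one, hC, star_trivial]
  have hset : spectrum ℝ M = ({(2:ℝ)} : Set ℝ) - spectrum ℝ C := by
    rw [hMdef, spectrum.singleton_sub_eq, Algebra.algebraMap_eq_smul_one]
  have hpsd : M.PosSemidef := by
    apply hM.posSemidef_iff_eigenvalues_nonneg.mpr
    intro i
    rw [Pi.zero_apply]
    have hmem := hM.eigenvalues_mem_spectrum_real i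
    rw [hset, Set.mem_sub] at hmem
    obtain ⟨r, hr, s, hs, hrs⟩ := hmem
    rw [Set.mem_singleton_iff] at hr
    have h2 := abs_le.mp (hspec s hs)
    subst hr
    rw [← hrs]
    linarith [h2.2]
  have hstar : star u = u := by ext i; simp
  have h0 : star u ⬝ᵥ M *ᵥ u = 0 := by
    rw [hstar, hMdef, sub_mulVec, smul_mulVec, one_mulVec, dotProduct_sub,
      dotProduct_smul, hu]
    simp [smul_eq_mul]
  have hMu : M *ᵥ u = 0 := (hpsd.dotProduct_mulVec_zero_iff u).mp h0
  rw [hMdef, sub_mulVec, smul_mulVec, one_mulVec, sub_eq_zero] at hMu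
  funext i
  have h3 := congrFun hMu i
  simp only [Pi.smul_apply, smul_eq_mul] at h3
  linarith [h3.le, h3.ge]

/-- In a cyclotomic signed graph, any vertex `z` outside a triangle
`v, w, x` is adjacent to an even number of the triangle's vertices. -/
theorem triangle_even_attachment
    {n : ℕ} (A : Matrix (Fin n) (Fin n) ℤ) (hsymm : A.IsSymm)
    (hdiag : ∀ i, A i i = 0)
    (hent : ∀ i j, A i j = -1 ∨ A i j = 0 ∨ A i j = 1)
    (hcyc : IsCyclo A)
    (v w x z : Fin n)
    (hvw : v ≠ w) (hvx : v ≠ x) (hwx : w ≠ x)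
    (hzv : z ≠ v) (hzw : z ≠ w) (hzx : z ≠ x)
    (hAvw : A v w ≠ 0) (hAwx : A w x ≠ 0) (hAvx : A v x ≠ 0) :
    Even ((({v, w, x} : Finset (Fin n)).filter (fun y => A z y ≠ 0)).card) := by
  classical
  have ha : A v w = 1 ∨ A v w = -1 := by rcases hent v w with h | h | h <;> simp_all
  have hb : A w x = 1 ∨ A w x = -1 := by rcases hent w x with h | h | h <;> simp_all
  have hc : A v x = 1 ∨ A v x = -1 := by rcases hent v x with h | h | h <;> simp_all
  have hp1 : A v w * A w x * A v x = 1 ∨ A v w * A w x * A v x = -1 := by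
    rcases ha with h | h <;> rcases hb with h' | h' <;> rcases hc with h'' | h'' <;>
      rw [h, h', h''] <;> norm_num
  have hew1 : (A v w * A w x * A v x) * A v w = 1 ∨ (A v w * A w x * A v x) * A v w = -1 := by
    rcases ha with h | h <;> rcases hb with h' | h' <;> rcases hc with h'' | h'' <;>
      rw [h, h', h''] <;> norm_num
  have hex1 : A v w * A w x = 1 ∨ A v w * A w x = -1 := by
    rcases ha with h | h <;> rcases hb with h' | h' <;> rw [h, h'] <;> norm_num
  obtain ⟨D, hD⟩ : ∃ D : Matrix (Fin n) (Fin n) ℤ, D = (A v w * A w x * A v x) • A := ⟨_, rfl⟩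
  obtain ⟨ew, hew⟩ : ∃ ew : ℤ, ew = (A v w * A w x * A v x) * A v w := ⟨_, rfl⟩
  obtain ⟨ex, hex⟩ : ∃ ex : ℤ, ex = A v w * A w x := ⟨_, rfl⟩
  obtain ⟨uZ, huZ⟩ : ∃ uZ : Fin n → ℤ,
    uZ = Pi.single v 1 + Pi.single w ew + Pi.single x ex := ⟨_, rfl⟩
  have hew2 : ew = 1 ∨ ew = -1 := by rw [hew]; exact hew1
  have hex2 : ex = 1 ∨ ex = -1 := by rw [hex]; exact hex1
  have hDspec : ∀ μ ∈ spectrum ℝ (D.map ((↑) : ℤ → ℝ)), |μ| ≤ 2 := by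
    rcases hp1 with h | h
    · rw [hD, h, one_smul]; exact hcyc
    · rw [hD, h, neg_smul, one_smul]
      have hmapneg : ((-A).map ((↑) : ℤ → ℝ)) = -(A.map ((↑) : ℤ → ℝ)) := by
        ext i j; simp
      rw [hmapneg]
      intro μ hμ
      rw [← spectrum.neg_eq, Set.mem_neg] at hμ
      have := hcyc _ hμ
      rwa [abs_neg] at this
  have hDherm : (D.map ((↑) : ℤ → ℝ)).IsHermitian := by
    rw [Matrix.IsHermitian]
    ext i j
    simp only [conjTranspose_apply, Matrix.map_apply, hD, Matrix.smul_apply, smul_eq_mul, star_trivial]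
    rw [hsymm.apply i j]
  have hquad : uZ ⬝ᵥ D *ᵥ uZ = 6 := by
    rw [huZ, quad_calc]
    simp only [hD, Matrix.smul_apply, smul_eq_mul]
    rw [hdiag v, hdiag w, hdiag x, hsymm.apply v w, hsymm.apply v x, hsymm.apply w x, hew, hex]
    rcases ha with h | h <;> rcases hb with h' | h' <;> rcases hc with h'' | h'' <;>
      rw [h, h', h''] <;> norm_num
  have hnorm : uZ ⬝ᵥ uZ = 3 := by
    rw [huZ, norm_calc v w x hvw hvx hwx]
    rcases hew2 with h | h <;> rcases hex2 with h' | h' <;> rw [h, h'] <;> norm_num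
  -- pass to ℝ
  have hf : ⇑(Int.castRingHom ℝ) = ((↑) : ℤ → ℝ) := rfl
  have hquadR : ((↑) ∘ uZ : Fin n → ℝ) ⬝ᵥ (D.map ((↑) : ℤ → ℝ)) *ᵥ ((↑) ∘ uZ) =
      2 * (((↑) ∘ uZ : Fin n → ℝ) ⬝ᵥ ((↑) ∘ uZ)) := by
    have h1 : (D.map ((↑) : ℤ → ℝ)) *ᵥ ((↑) ∘ uZ) = ((↑) : ℤ → ℝ) ∘ (D *ᵥ uZ) := by
      funext i; exact (RingHom.map_mulVec (Int.castRingHom ℝ) D uZ i).symm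
    rw [h1, ← hf, ← RingHom.map_dotProduct, ← RingHom.map_dotProduct, hquad, hnorm]
    norm_num
  have hKey := mulVec_eq_of_quad (D.map ((↑) : ℤ → ℝ)) hDherm hDspec ((↑) ∘ uZ) hquadR
  have hz0 : uZ z = 0 := by
    rw [huZ]
    simp [Pi.single_apply, hzv, hzw, hzx]
  have hrowR := congrFun hKey z
  have hrowcast : (((D *ᵥ uZ) z : ℤ) : ℝ) = 0 := by
    have h2 : (((D *ᵥ uZ) z : ℤ) : ℝ) = ((D.map ((↑) : ℤ → ℝ)) *ᵥ ((↑) ∘ uZ)) z := by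
      rw [← hf]
      exact RingHom.map_mulVec (Int.castRingHom ℝ) D uZ z
    rw [h2, hrowR]
    simp [Function.comp_apply, hz0]
  have hrowZ : (D *ᵥ uZ) z = 0 := by exact_mod_cast hrowcast
  rw [huZ, row_calc] at hrowZ
  simp only [hD, Matrix.smul_apply, smul_eq_mul] at hrowZ
  have hcard : (({v, w, x} : Finset (Fin n)).filter (fun y => A z y ≠ 0)).card
      = (if A z v ≠ 0 then 1 else 0) + ((if A z w ≠ 0 then 1 else 0)
        + (if A z x ≠ 0 then 1 else 0)) := by
    have h1 : (({v, w, x} : Finset (Fin n)).filter (fun y => A z y ≠ 0)).card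
        = ∑ y ∈ ({v, w, x} : Finset (Fin n)), if A z y ≠ 0 then 1 else 0 :=
      Finset.card_filter _ _
    rw [h1, Finset.sum_insert (by simp [hvw, hvx]), Finset.sum_insert (by simp [hwx]),
      Finset.sum_singleton]
  rw [hcard]
  exact parity_helper hp1 hew2 hex2 (hent z v) (hent z w) (hent z x) hrowZ
end

section
/- Let A be a cyclotomic signed graph containing two triangles that share an edge: distinct vertices v, w, x, z with A v w, A v x, A w x, A v z, A w z all nonzero and x ≠ z. Then one triangle has an even number of negative edges and the other has an odd number of negative edges; equivalently, A v x · A w x · A v z · A w z = −1. -/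
open Matrix

/-- If all eigenvalues of a real symmetric matrix have absolute value at most 2,
then `4 • 1 - M * M` is positive semidefinite. -/
lemma four_sub_sq_posSemidef {n : ℕ} (M : Matrix (Fin n) (Fin n) ℝ)
    (hM : M.IsHermitian) (heig : ∀ i, |hM.eigenvalues i| ≤ 2) :
    ((4 : ℝ) • (1 : Matrix (Fin n) (Fin n) ℝ) - M * M).PosSemidef := by
  have hU : (hM.eigenvectorUnitary : Matrix (Fin n) (Fin n) ℝ) *
      star (hM.eigenvectorUnitary : Matrix (Fin n) (Fin n) ℝ) = 1 :=
    (Matrix.mem_unitaryGroup_iff).mp hM.eigenvectorUnitary.2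
  set U : Matrix (Fin n) (Fin n) ℝ := (hM.eigenvectorUnitary : Matrix (Fin n) (Fin n) ℝ) with hUdef
  set d : Fin n → ℝ := fun i => 4 - hM.eigenvalues i * hM.eigenvalues i with hd
  have key : (4 : ℝ) • (1 : Matrix (Fin n) (Fin n) ℝ) - M * M
      = U * Matrix.diagonal d * Uᴴ := by
    have hspec := hM.spectral_theorem
    rw [Unitary.conjStarAlgAut_apply] at hspec
    have hDD : Matrix.diagonal ((RCLike.ofReal : ℝ → ℝ) ∘ hM.eigenvalues) *
        Matrix.diagonal ((RCLike.ofReal : ℝ → ℝ) ∘ hM.eigenvalues)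
        = Matrix.diagonal (fun i => hM.eigenvalues i * hM.eigenvalues i) := by
      rw [Matrix.diagonal_mul_diagonal]
      congr 1
    have hMM : M * M = U * Matrix.diagonal (fun i => hM.eigenvalues i * hM.eigenvalues i)
        * star U := by
      calc M * M = (U * Matrix.diagonal ((RCLike.ofReal : ℝ → ℝ) ∘ hM.eigenvalues) * star U) *
            (U * Matrix.diagonal ((RCLike.ofReal : ℝ → ℝ) ∘ hM.eigenvalues) * star U) := by
              rw [← hspec]
        _ = U * (Matrix.diagonal ((RCLike.ofReal : ℝ → ℝ) ∘ hM.eigenvalues) * ((star U * U) *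
            Matrix.diagonal ((RCLike.ofReal : ℝ → ℝ) ∘ hM.eigenvalues))) * star U := by
              noncomm_ring
        _ = U * Matrix.diagonal (fun i => hM.eigenvalues i * hM.eigenvalues i) * star U := by
              rw [(Matrix.mem_unitaryGroup_iff').mp hM.eigenvectorUnitary.2, one_mul, hDD]
    have h4 : (4 : ℝ) • (1 : Matrix (Fin n) (Fin n) ℝ)
        = U * ((4 : ℝ) • (1 : Matrix (Fin n) (Fin n) ℝ)) * star U := by
      rw [Matrix.mul_smul, mul_one, Matrix.smul_mul, hU]
    rw [hMM]
    nth_rewrite 1 [h4]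
    rw [← Matrix.star_eq_conjTranspose, ← Matrix.sub_mul, ← Matrix.mul_sub]
    congr 1
    rw [hd]
    rw [← Matrix.diagonal_one, ← Matrix.diagonal_smul, Matrix.diagonal_sub]
    congr 1
    funext i
    simp
  rw [key]
  apply Matrix.PosSemidef.mul_mul_conjTranspose_same
  rw [Matrix.posSemidef_diagonal_iff]
  intro i
  have := heig i
  rw [abs_le] at this
  simp only [hd]
  nlinarith [this.1, this.2]

/-- In a cyclotomic signed graph, if two triangles `v w x` and
`v w z` share the edge `{v,w}`, then one triangle has an even and the other an odd
number of negative edges; equivalently the product of the four non-shared edge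
signs is `-1`. -/
theorem shared_edge_triangles_opposite_parity
    {n : ℕ} (A : Matrix (Fin n) (Fin n) ℤ) (hsymm : A.IsSymm)
    (hdiag : ∀ i, A i i = 0)
    (hent : ∀ i j, A i j = -1 ∨ A i j = 0 ∨ A i j = 1)
    (hcyc : IsCyclo A)
    (v w x z : Fin n)
    (hvw : v ≠ w) (hvx : v ≠ x) (hwx : w ≠ x)
    (hvz : v ≠ z) (hwz : w ≠ z) (hxz : x ≠ z)
    (hAvw : A v w ≠ 0) (hAvx : A v x ≠ 0) (hAwx : A w x ≠ 0)
    (hAvz : A v z ≠ 0) (hAwz : A w z ≠ 0) :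
    A v x * A w x * A v z * A w z = -1 := by
  by_contra hcon
  have sgn : ∀ i j, A i j ≠ 0 → A i j = 1 ∨ A i j = -1 := fun i j h => by
    rcases hent i j with h' | h' | h' <;> simp_all
  have ha := sgn v w hAvw
  have hb := sgn v x hAvx
  have hd := sgn w x hAwx
  have hc := sgn v z hAvz
  have he := sgn w z hAwz
  -- the product of the four edge signs is 1
  have hP : A v x * A w x * A v z * A w z = 1 := by
    rcases hb with hb | hb <;> rcases hd with hd | hd <;> rcases hc with hc | hc <;>
      rcases he with he | he <;> rw [hb, hd, hc, he] at hcon ⊢ <;> norm_num at hcon <;> norm_num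
  have ha2 : A v w * A v w = 1 := by rcases ha with h | h <;> rw [h] <;> norm_num
  have hb2 : A v x * A v x = 1 := by rcases hb with h | h <;> rw [h] <;> norm_num
  have hd2 : A w x * A w x = 1 := by rcases hd with h | h <;> rw [h] <;> norm_num
  have hc2 : A v z * A v z = 1 := by rcases hc with h | h <;> rw [h] <;> norm_num
  -- integer identities
  have hI1 : (A v x * A w x) * A w x = A v x := by linear_combination A v x * hd2
  have hI2 : (A v x * A w x) * A w z = A v z := by
    linear_combination A v z * hP - (A v x * A w x * A w z) * hc2
  have hs2 : (A v x * A w x) * (A v x * A w x) = 1 := by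
    linear_combination (A w x * A w x) * hb2 + hd2
  -- pass to the real matrix
  set M : Matrix (Fin n) (Fin n) ℝ := A.map ((↑) : ℤ → ℝ) with hMdef
  have hMsymm : M.IsSymm := hsymm.map _
  have hM : M.IsHermitian := by
    show Mᴴ = M
    rw [Matrix.conjTranspose_eq_transpose_of_trivial]
    exact hMsymm
  have heig : ∀ i, |hM.eigenvalues i| ≤ 2 := fun i =>
    hcyc _ (hM.eigenvalues_mem_spectrum_real i)
  have hpsd := four_sub_sq_posSemidef M hM heig
  -- the test vector
  set s : ℝ := ((A v x * A w x : ℤ) : ℝ) with hsdef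
  set u : Fin n → ℝ := (Pi.single v 1 : Fin n → ℝ) + s • (Pi.single w 1 : Fin n → ℝ) with hudef
  have hMap : ∀ i j, M i j = ((A i j : ℤ) : ℝ) := fun i j => rfl
  have hy : ∀ j, (M *ᵥ u) j = ((A j v : ℤ) : ℝ) + s * ((A j w : ℤ) : ℝ) := by
    intro j
    rw [hudef, Matrix.mulVec_add, Matrix.mulVec_smul, Matrix.mulVec_single, Matrix.mulVec_single]
    simp [hMap]
  -- upper bound from positive semidefiniteness
  have hsu : star u = u := by
    funext i; simp
  have hupper : (M *ᵥ u) ⬝ᵥ (M *ᵥ u) ≤ 4 * (u ⬝ᵥ u) := by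
    have h0 := hpsd.dotProduct_mulVec_nonneg u
    rw [hsu, Matrix.sub_mulVec, dotProduct_sub, Matrix.smul_mulVec,
      Matrix.one_mulVec, dotProduct_smul, ← Matrix.mulVec_mulVec,
      Matrix.dotProduct_mulVec (R := ℝ) u M, ← Matrix.mulVec_transpose, hMsymm.eq] at h0
    rw [smul_eq_mul] at h0
    linarith
  -- compute u ⬝ᵥ u = 2
  have hs2R : s * s = 1 := by
    rw [hsdef]; exact_mod_cast hs2
  have huu : u ⬝ᵥ u = 2 := by
    rw [hudef]
    rw [dotProduct_add, add_dotProduct, add_dotProduct,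
      dotProduct_smul, smul_dotProduct, smul_dotProduct,
      dotProduct_single, dotProduct_single,
      single_dotProduct, single_dotProduct]
    simp [Pi.single_apply, hvw, hvw.symm, hs2R]
    linarith [hs2R]
  -- lower bound from the four distinguished coordinates
  set f : Fin n → ℝ := fun j => ((M *ᵥ u) j) ^ 2 with hfdef
  have hdot : (M *ᵥ u) ⬝ᵥ (M *ᵥ u) = ∑ j, f j := by
    simp [hfdef, dotProduct, sq]
  have hsum_le : ∑ j ∈ ({v, w, x, z} : Finset (Fin n)), f j ≤ ∑ j, f j := by
    apply Finset.sum_le_sum_of_subset_of_nonneg (Finset.subset_univ _)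
    intro j _ _
    positivity
  have hsplit : ∑ j ∈ ({v, w, x, z} : Finset (Fin n)), f j = f v + f w + f x + f z := by
    rw [show ({v, w, x, z} : Finset (Fin n)) = insert v (insert w (insert x {z})) from rfl]
    rw [Finset.sum_insert (by simp [hvw, hvx, hvz]),
      Finset.sum_insert (by simp [hwx, hwz]),
      Finset.sum_insert (by simp [hxz]), Finset.sum_singleton]
    ring
  -- evaluate the four coordinates
  have hfv : f v = 1 := by
    rw [hfdef]
    simp only [hy v, hdiag v, Int.cast_zero, zero_add]
    have : ((A v w : ℤ) : ℝ) * ((A v w : ℤ) : ℝ) = 1 := by exact_mod_cast ha2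
    nlinarith [hs2R, this]
  have hfw : f w = 1 := by
    rw [hfdef]
    simp only [hy w, hdiag w, Int.cast_zero, mul_zero, add_zero]
    rw [hsymm.apply v w]
    have : ((A v w : ℤ) : ℝ) * ((A v w : ℤ) : ℝ) = 1 := by exact_mod_cast ha2
    nlinarith [this]
  have hfx : f x = 4 := by
    rw [hfdef]
    simp only [hy x]
    rw [hsymm.apply v x, hsymm.apply w x]
    have h1 : s * ((A w x : ℤ) : ℝ) = ((A v x : ℤ) : ℝ) := by
      rw [hsdef]; exact_mod_cast hI1
    rw [h1]
    have : ((A v x : ℤ) : ℝ) * ((A v x : ℤ) : ℝ) = 1 := by exact_mod_cast hb2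
    nlinarith [this]
  have hfz : f z = 4 := by
    rw [hfdef]
    simp only [hy z]
    rw [hsymm.apply v z, hsymm.apply w z]
    have h1 : s * ((A w z : ℤ) : ℝ) = ((A v z : ℤ) : ℝ) := by
      rw [hsdef]; exact_mod_cast hI2
    rw [h1]
    have : ((A v z : ℤ) : ℝ) * ((A v z : ℤ) : ℝ) = 1 := by exact_mod_cast hc2
    nlinarith [this]
  -- contradiction: 10 ≤ 8
  rw [hdot, huu] at hupper
  rw [hfv, hfw, hfx, hfz] at hsplit
  linarith [hsum_le, hsplit, hupper]
end

section
/- Let A be a cyclotomic signed graph. Then no three triangles of A share a single edge: there do not exist five distinct vertices v, w, x, y, z with A v w ≠ 0 and with each of x, y, z adjacent to both v and w (i.e. A v x, A w x, A v y, A w y, A v z, A w z all nonzero). -/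
open Matrix

lemma quad_bound {n : ℕ} (B : Matrix (Fin n) (Fin n) ℝ) (hB : B.IsHermitian)
    (h2 : ∀ μ ∈ spectrum ℝ B, |μ| ≤ 2) (u : Fin n → ℝ) :
    (B *ᵥ u) ⬝ᵥ (B *ᵥ u) ≤ 4 * (u ⬝ᵥ u) := by
  set U : Matrix (Fin n) (Fin n) ℝ := (hB.eigenvectorUnitary : Matrix (Fin n) (Fin n) ℝ) with hU
  have hUU : U * star U = 1 := (Matrix.mem_unitaryGroup_iff).mp hB.eigenvectorUnitary.2
  have hUU' : star U * U = 1 := (Matrix.mem_unitaryGroup_iff').mp hB.eigenvectorUnitary.2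
  have hBB : B * B = U * diagonal (fun i => hB.eigenvalues i ^ 2) * star U := by
    conv_lhs => rw [hB.spectral_theorem]
    simp only [RCLike.ofReal_real_eq_id, Function.comp_def, id_eq, Unitary.conjStarAlgAut_apply,
      Unitary.coe_star, ← hU]
    rw [show (U * diagonal hB.eigenvalues * star U) * (U * diagonal hB.eigenvalues * star U)
        = U * (diagonal hB.eigenvalues * (star U * U) * diagonal hB.eigenvalues) * star U by
      noncomm_ring]
    rw [hUU', mul_one, diagonal_mul_diagonal]
    congr 1
    ext i
    ring
  have h4 : (4 : ℝ) • (1 : Matrix (Fin n) (Fin n) ℝ)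
      = U * diagonal (fun _ : Fin n => (4:ℝ)) * star U := by
    rw [show Matrix.diagonal (fun _ : Fin n => (4:ℝ)) = (4:ℝ) • 1 by
      rw [smul_eq_diagonal_mul]; simp]
    rw [Matrix.mul_smul, Matrix.smul_mul, mul_one, hUU]
  have hC : Matrix.PosSemidef ((4:ℝ) • (1 : Matrix (Fin n) (Fin n) ℝ) - B * B) := by
    have hd : Matrix.PosSemidef
        (Matrix.diagonal (fun i => (4:ℝ) - hB.eigenvalues i ^ 2)) := by
      refine posSemidef_diagonal_iff.mpr fun i => ?_
      have := abs_le.mp (h2 _ (hB.eigenvalues_mem_spectrum_real i))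
      nlinarith [this.1, this.2]
    have key := hd.mul_mul_conjTranspose_same U
    have : (4:ℝ) • (1 : Matrix (Fin n) (Fin n) ℝ) - B * B
        = U * diagonal (fun i => (4:ℝ) - hB.eigenvalues i ^ 2) * Uᴴ := by
      rw [hBB, h4, ← Matrix.diagonal_sub]
      rw [conjTranspose_eq_transpose_of_trivial]
      simp only [Matrix.sub_mul, Matrix.mul_sub]
      rfl
    rw [this]
    exact key
  have := hC.dotProduct_mulVec_nonneg u
  rw [star_trivial, Matrix.sub_mulVec, dotProduct_sub, smul_mulVec, one_mulVec,
    dotProduct_smul, ← mulVec_mulVec, Matrix.dotProduct_mulVec] at this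
  have ht : Bᵀ = B := by rw [← Matrix.conjTranspose_eq_transpose_of_trivial]; exact hB
  have hsy : u ᵥ* B = B *ᵥ u := by rw [← Matrix.mulVec_transpose, ht]
  rw [hsy] at this
  rw [smul_eq_mul] at this
  linarith

/-- In a cyclotomic signed graph, no three triangles share a
single edge. -/
theorem no_three_triangles_share_an_edge
    {n : ℕ} (A : Matrix (Fin n) (Fin n) ℤ) (hsymm : A.IsSymm)
    (hdiag : ∀ i, A i i = 0)
    (hent : ∀ i j, A i j = -1 ∨ A i j = 0 ∨ A i j = 1)
    (hcyc : IsCyclo A) :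
    ¬ ∃ v w x y z : Fin n,
        v ≠ w ∧ v ≠ x ∧ v ≠ y ∧ v ≠ z ∧ w ≠ x ∧ w ≠ y ∧ w ≠ z ∧
        x ≠ y ∧ x ≠ z ∧ y ≠ z ∧
        A v w ≠ 0 ∧
        A v x ≠ 0 ∧ A w x ≠ 0 ∧
        A v y ≠ 0 ∧ A w y ≠ 0 ∧
        A v z ≠ 0 ∧ A w z ≠ 0 := by
  rintro ⟨v, w, x, y, z, hvw, hvx, hvy, hvz, hwx, hwy, hwz, hxy, hxz, hyz,
    evw, evx, ewx, evy, ewy, evz, ewz⟩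
  set B : Matrix (Fin n) (Fin n) ℝ := A.map ((↑) : ℤ → ℝ) with hBdef
  have hB : B.IsHermitian := by
    rw [Matrix.IsHermitian]
    ext i j
    simp [hBdef, Matrix.conjTranspose_apply, hsymm.apply i j]
  -- entries are ±1 when nonzero
  have he : ∀ i j : Fin n, A i j ≠ 0 → A i j = 1 ∨ A i j = -1 := by
    intro i j h; rcases hent i j with h1 | h1 | h1 <;> tauto
  have hsy : ∀ i j : Fin n, A i j = A j i := fun i j => (hsymm.apply j i)
  -- the six triangle entries, from the x/y/z side
  have exv : A x v ≠ 0 := by rw [← hsy]; exact evx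
  have exw : A x w ≠ 0 := by rw [← hsy]; exact ewx
  have eyv : A y v ≠ 0 := by rw [← hsy]; exact evy
  have eyw : A y w ≠ 0 := by rw [← hsy]; exact ewy
  have ezv : A z v ≠ 0 := by rw [← hsy]; exact evz
  have ezw : A z w ≠ 0 := by rw [← hsy]; exact ewz
  set s : ℤ := A x v * A x w + A y v * A y w + A z v * A z w with hs
  have hpx : A x v * A x w = 1 ∨ A x v * A x w = -1 := by
    rcases he x v exv with h1 | h1 <;> rcases he x w exw with h2 | h2 <;> simp [h1, h2]
  have hpy : A y v * A y w = 1 ∨ A y v * A y w = -1 := by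
    rcases he y v eyv with h1 | h1 <;> rcases he y w eyw with h2 | h2 <;> simp [h1, h2]
  have hpz : A z v * A z w = 1 ∨ A z v * A z w = -1 := by
    rcases he z v ezv with h1 | h1 <;> rcases he z w ezw with h2 | h2 <;> simp [h1, h2]
  set β : ℝ := if 0 < s then 1 else -1 with hβ
  have hβ1 : β = 1 ∨ β = -1 := by rw [hβ]; split <;> simp
  have hβ2 : β * β = 1 := by rcases hβ1 with h | h <;> rw [h] <;> norm_num
  have hβs : 1 ≤ β * (s : ℝ) := by
    have hsval : s = 3 ∨ s = 1 ∨ s = -1 ∨ s = -3 := by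
      rcases hpx with h1 | h1 <;> rcases hpy with h2 | h2 <;> rcases hpz with h3 | h3 <;>
        rw [hs, h1, h2, h3] <;> norm_num
    rcases hsval with h | h | h | h <;> rw [hβ, h] <;> norm_num
  set u : Fin n → ℝ := Pi.single v 1 + Pi.single w β with hu
  have huu : u ⬝ᵥ u = 2 := by
    rw [hu, dotProduct_add, add_dotProduct, add_dotProduct,
      dotProduct_single, dotProduct_single, dotProduct_single, dotProduct_single,
      Pi.single_apply, Pi.single_apply, Pi.single_apply, Pi.single_apply]
    simp only [if_neg hvw.symm, if_neg hvw, if_pos rfl, if_true]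
    linear_combination hβ2
  have hBu : B *ᵥ u = fun i => B i v * 1 + B i w * β := by
    rw [hu, Matrix.mulVec_add, Matrix.mulVec_single, Matrix.mulVec_single]
    rfl
  have hquad := quad_bound B hB hcyc u
  rw [huu] at hquad
  -- lower bound on the quadratic form
  set f : Fin n → ℝ := fun i => (B *ᵥ u) i * (B *ᵥ u) i with hf
  have hdp : (B *ᵥ u) ⬝ᵥ (B *ᵥ u) = ∑ i, f i := rfl
  set S : Finset (Fin n) := {v, w, x, y, z} with hS
  have hsub : ∑ i ∈ S, f i ≤ ∑ i, f i :=
    Finset.sum_le_sum_of_subset_of_nonneg (Finset.subset_univ S)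
      (fun i _ _ => mul_self_nonneg _)
  have hSsum : ∑ i ∈ S, f i = f v + f w + f x + f y + f z := by
    rw [hS]
    rw [Finset.sum_insert (by simp [hvw, hvx, hvy, hvz]),
      Finset.sum_insert (by simp [hwx, hwy, hwz]),
      Finset.sum_insert (by simp [hxy, hxz]),
      Finset.sum_insert (by simp [hyz]),
      Finset.sum_singleton]
    ring
  have hBij : ∀ i j : Fin n, B i j = (A i j : ℝ) := fun i j => rfl
  have hfv : f v = 1 := by
    have hAvw : (A v w : ℝ) * (A v w : ℝ) = 1 := by
      rcases he v w evw with h | h <;> rw [h] <;> norm_num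
    rw [hf, hBu]
    simp only [hBij, hdiag v]
    push_cast
    nlinarith [hβ2, hAvw]
  have hfw : f w = 1 := by
    have hAwv : (A w v : ℝ) * (A w v : ℝ) = 1 := by
      have : A w v ≠ 0 := by rw [← hsy]; exact evw
      rcases he w v this with h | h <;> rw [h] <;> norm_num
    rw [hf, hBu]
    simp only [hBij, hdiag w]
    push_cast
    nlinarith [hAwv]
  have htri : ∀ i : Fin n, A i v ≠ 0 → A i w ≠ 0 →
      f i = 2 + 2 * β * ((A i v : ℝ) * (A i w : ℝ)) := by
    intro i hiv hiw
    have h1 : (A i v : ℝ) * (A i v : ℝ) = 1 := by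
      rcases he i v hiv with h | h <;> rw [h] <;> norm_num
    have h2 : (A i w : ℝ) * (A i w : ℝ) = 1 := by
      rcases he i w hiw with h | h <;> rw [h] <;> norm_num
    rw [hf, hBu]
    simp only [hBij]
    nlinarith [hβ2, h1, h2]
  have hlow : (10 : ℝ) ≤ ∑ i ∈ S, f i := by
    rw [hSsum, hfv, hfw, htri x exv exw, htri y eyv eyw, htri z ezv ezw]
    have : ((A x v : ℝ) * (A x w : ℝ)) + ((A y v : ℝ) * (A y w : ℝ))
        + ((A z v : ℝ) * (A z w : ℝ)) = (s : ℝ) := by rw [hs]; push_cast; ring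
    have h2 : β * ((A x v : ℝ) * (A x w : ℝ)) + β * ((A y v : ℝ) * (A y w : ℝ))
        + β * ((A z v : ℝ) * (A z w : ℝ)) = β * (s : ℝ) := by rw [← this]; ring
    linarith [hβs, h2]
  rw [hdp] at hquad
  linarith
end

section
/- Let A be a cyclotomic signed graph. Then A does not contain a tetrahedron as an induced subgraph: there do not exist four distinct vertices v, w, x, z that are pairwise adjacent (all six of A v w, A v x, A v z, A w x, A w z, A x z nonzero). -/
open Matrix

private lemma mulVec_self_dot {n : ℕ} (M : Matrix (Fin n) (Fin n) ℝ)
    (hM : Mᵀ * M = 1) (x : Fin n → ℝ) : (M *ᵥ x) ⬝ᵥ (M *ᵥ x) = x ⬝ᵥ x := by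
  rw [dotProduct_mulVec, ← mulVec_transpose, mulVec_mulVec, hM, one_mulVec, dotProduct_comm]

private lemma key_ineq {n : ℕ} (A : Matrix (Fin n) (Fin n) ℤ) (hsymm : A.IsSymm)
    (hcyc : ∀ μ ∈ spectrum ℝ (A.map ((↑) : ℤ → ℝ)), |μ| ≤ 2) (u : Fin n → ℝ) :
    ((A.map ((↑) : ℤ → ℝ)) *ᵥ u) ⬝ᵥ ((A.map ((↑) : ℤ → ℝ)) *ᵥ u) ≤ 4 * (u ⬝ᵥ u) := by
  set Ar := A.map ((↑) : ℤ → ℝ) with hAr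
  have hsr : Ar.IsSymm := by
    rw [Matrix.IsSymm, ← Matrix.transpose_map, hsymm]
  have hA : Ar.IsHermitian := by
    rw [Matrix.IsHermitian, conjTranspose_eq_transpose_of_trivial, hsr]
  set U := (hA.eigenvectorUnitary : Matrix (Fin n) (Fin n) ℝ) with hU
  have hU1 : star U * U = 1 := (Matrix.mem_unitaryGroup_iff').mp hA.eigenvectorUnitary.2
  have hU2 : U * star U = 1 := (Matrix.mem_unitaryGroup_iff).mp hA.eigenvectorUnitary.2
  have hstarU : star U = Uᵀ := by
    rw [Matrix.star_eq_conjTranspose, conjTranspose_eq_transpose_of_trivial]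
  have hspec := hA.spectral_theorem
  set D := Matrix.diagonal ((RCLike.ofReal : ℝ → ℝ) ∘ hA.eigenvalues) with hD
  set y := Uᵀ *ᵥ u with hy
  have hAu : Ar *ᵥ u = U *ᵥ (D *ᵥ y) := by
    conv_lhs => rw [hspec, Unitary.conjStarAlgAut_apply, ← hU]
    rw [hy, hstarU, ← mulVec_mulVec, ← mulVec_mulVec]
  have hUnorm : (Ar *ᵥ u) ⬝ᵥ (Ar *ᵥ u) = (D *ᵥ y) ⬝ᵥ (D *ᵥ y) := by
    rw [hAu, mulVec_self_dot U (by rw [← hstarU, hU1]) (D *ᵥ y)]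
  have hynorm : y ⬝ᵥ y = u ⬝ᵥ u := by
    rw [hy, mulVec_self_dot Uᵀ (by rw [Matrix.transpose_transpose, ← hstarU, hU2]) u]
  rw [hUnorm, ← hynorm]
  have hev : ∀ i, |hA.eigenvalues i| ≤ 2 := fun i =>
    hcyc _ (hA.eigenvalues_mem_spectrum_real i)
  simp only [dotProduct, hD, mulVec_diagonal, Function.comp_apply, RCLike.ofReal_real_eq_id,
    id_eq, Finset.mul_sum]
  apply Finset.sum_le_sum
  intro i _
  have h1 : (hA.eigenvalues i)^2 ≤ 4 := by
    have := hev i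
    nlinarith [abs_nonneg (hA.eigenvalues i), sq_abs (hA.eigenvalues i)]
  nlinarith [sq_nonneg (y i), sq_nonneg (hA.eigenvalues i * y i)]


/-- A cyclotomic signed graph contains no tetrahedron: no four
distinct vertices are pairwise adjacent. -/
theorem no_tetrahedron
    {n : ℕ} (A : Matrix (Fin n) (Fin n) ℤ) (hsymm : A.IsSymm)
    (hdiag : ∀ i, A i i = 0)
    (hent : ∀ i j, A i j = -1 ∨ A i j = 0 ∨ A i j = 1)
    (hcyc : IsCyclo A) :
    ¬ ∃ v w x z : Fin n,
        v ≠ w ∧ v ≠ x ∧ v ≠ z ∧ w ≠ x ∧ w ≠ z ∧ x ≠ z ∧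
        A v w ≠ 0 ∧ A v x ≠ 0 ∧ A v z ≠ 0 ∧
        A w x ≠ 0 ∧ A w z ≠ 0 ∧ A x z ≠ 0 := by
  rintro ⟨v, w, x, z, hvw, hvx, hvz, hwx, hwz, hxz,
    nvw, nvx, nvz, nwx, nwz, nxz⟩
  set Ar := A.map ((↑) : ℤ → ℝ) with hAr
  set u : Fin n → ℝ := Pi.single w ((A v w : ℝ)) + Pi.single x ((A v x : ℝ))
      + Pi.single z ((A v z : ℝ)) with hu
  have hkey := key_ineq A hsymm hcyc u
  have hf : ∀ i, (Ar *ᵥ u) i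
      = (A i w : ℝ) * (A v w : ℝ) + (A i x : ℝ) * (A v x : ℝ) + (A i z : ℝ) * (A v z : ℝ) := by
    intro i
    simp [hu, mulVec_add, hAr, Matrix.map_apply]
  have huu : u ⬝ᵥ u = (A v w : ℝ) * (A v w : ℝ) + (A v x : ℝ) * (A v x : ℝ)
      + (A v z : ℝ) * (A v z : ℝ) := by
    simp [hu, add_dotProduct, dotProduct_add, dotProduct_single, single_dotProduct,
      Pi.single_apply, hwx, hwz, hxz, hwx.symm, hwz.symm, hxz.symm]
  set f := Ar *ᵥ u with hfdef
  have hss : ({v, w, x, z} : Finset (Fin n)) ⊆ Finset.univ := Finset.subset_univ _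
  have hsum : ∑ i ∈ ({v, w, x, z} : Finset (Fin n)), f i * f i ≤ f ⬝ᵥ f := by
    exact Finset.sum_le_sum_of_subset_of_nonneg hss (fun i _ _ => mul_self_nonneg _)
  have hexp : ∑ i ∈ ({v, w, x, z} : Finset (Fin n)), f i * f i
      = f v * f v + f w * f w + f x * f x + f z * f z := by
    rw [Finset.sum_insert (by simp [hvw, hvx, hvz]),
      Finset.sum_insert (by simp [hwx, hwz]),
      Finset.sum_insert (by simp [hxz]), Finset.sum_singleton]
    ring
  have hmain : f v * f v + f w * f w + f x * f x + f z * f z ≤ 4 * (u ⬝ᵥ u) := by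
    rw [← hexp]; exact le_trans hsum hkey
  rw [hf v, hf w, hf x, hf z, huu, hdiag, hsymm.apply w x, hsymm.apply w z,
    hsymm.apply x z, hdiag, hdiag] at hmain
  have hZ : ((A v w * A v w + A v x * A v x + A v z * A v z) *
        (A v w * A v w + A v x * A v x + A v z * A v z)
      + (0 * A v w + A w x * A v x + A w z * A v z) *
        (0 * A v w + A w x * A v x + A w z * A v z)
      + (A w x * A v w + 0 * A v x + A x z * A v z) *
        (A w x * A v w + 0 * A v x + A x z * A v z)
      + (A w z * A v w + A x z * A v x + 0 * A v z) *
        (A w z * A v w + A x z * A v x + 0 * A v z) : ℤ)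
      ≤ 4 * (A v w * A v w + A v x * A v x + A v z * A v z) := by
    exact_mod_cast hmain
  have e1 : A v w = -1 ∨ A v w = 1 := by
    rcases hent v w with h|h|h
    exacts [Or.inl h, absurd h nvw, Or.inr h]
  have e2 : A v x = -1 ∨ A v x = 1 := by
    rcases hent v x with h|h|h
    exacts [Or.inl h, absurd h nvx, Or.inr h]
  have e3 : A v z = -1 ∨ A v z = 1 := by
    rcases hent v z with h|h|h
    exacts [Or.inl h, absurd h nvz, Or.inr h]
  have e4 : A w x = -1 ∨ A w x = 1 := by
    rcases hent w x with h|h|h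
    exacts [Or.inl h, absurd h nwx, Or.inr h]
  have e5 : A w z = -1 ∨ A w z = 1 := by
    rcases hent w z with h|h|h
    exacts [Or.inl h, absurd h nwz, Or.inr h]
  have e6 : A x z = -1 ∨ A x z = 1 := by
    rcases hent x z with h|h|h
    exacts [Or.inl h, absurd h nxz, Or.inr h]
  rcases e1 with h1|h1 <;> rcases e2 with h2|h2 <;> rcases e3 with h3|h3 <;>
    rcases e4 with h4|h4 <;> rcases e5 with h5|h5 <;> rcases e6 with h6|h6 <;>
    rw [h1, h2, h3, h4, h5, h6] at hZ <;> norm_num at hZ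
end

section
/- Let A be a cyclotomic signed graph. Then every vertex of A has degree at most 4: for each index v, the number of indices w ≠ v with A v w ≠ 0 is at most 4. -/
open Matrix

/-- In a cyclotomic signed graph every vertex has degree at most 4. -/
theorem cyclotomic_signed_graph_degree_le_four
    {n : ℕ} (A : Matrix (Fin n) (Fin n) ℤ) (hsymm : A.IsSymm)
    (hdiag : ∀ i, A i i = 0)
    (hent : ∀ i j, A i j = -1 ∨ A i j = 0 ∨ A i j = 1)
    (hcyc : IsCyclo A)
    (v : Fin n) :
    (Finset.univ.filter (fun w => w ≠ v ∧ A v w ≠ 0)).card ≤ 4 := by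
  set B : Matrix (Fin n) (Fin n) ℝ := A.map ((↑) : ℤ → ℝ) with hBdef
  have hB : B.IsHermitian := by
    have : B.IsSymm := by
      ext i j
      simp only [hBdef, Matrix.map_apply, Matrix.transpose_apply]
      exact_mod_cast congrFun (congrFun hsymm i) j
    ext i j; simpa [Matrix.conjTranspose_apply] using congrFun (congrFun this i) j
  set U : Matrix (Fin n) (Fin n) ℝ := (hB.eigenvectorUnitary : Matrix (Fin n) (Fin n) ℝ) with hU
  have hUU : U * star U = 1 := (Matrix.mem_unitaryGroup_iff).mp hB.eigenvectorUnitary.2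
  have hsUU : star U * U = 1 := (Matrix.mem_unitaryGroup_iff').mp hB.eigenvectorUnitary.2
  have hEig : ∀ i, |hB.eigenvalues i| ≤ 2 := fun i =>
    hcyc _ (hB.eigenvalues_mem_spectrum_real i)
  -- B * B diagonal entry bound
  have hBB : B * B = U * Matrix.diagonal (fun i => (hB.eigenvalues i)^2) * star U := by
    have hspec := hB.spectral_theorem
    calc B * B = (U * Matrix.diagonal (RCLike.ofReal ∘ hB.eigenvalues) * star U) *
        (U * Matrix.diagonal (RCLike.ofReal ∘ hB.eigenvalues) * star U) := by rw [Unitary.conjStarAlgAut_apply] at hspec; rw [← hspec]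
      _ = U * (Matrix.diagonal (RCLike.ofReal ∘ hB.eigenvalues) * ((star U * U) *
            Matrix.diagonal (RCLike.ofReal ∘ hB.eigenvalues))) * star U := by
            simp only [Matrix.mul_assoc]
      _ = U * Matrix.diagonal (fun i => (hB.eigenvalues i)^2) * star U := by
            rw [hsUU, Matrix.one_mul, Matrix.diagonal_mul_diagonal]
            simp [Function.comp, sq]
  have hdiagBB : (B * B) v v ≤ 4 := by
    have h1 : (B * B) v v = ∑ i, (hB.eigenvalues i)^2 * (U v i)^2 := by
      rw [hBB]
      rw [Matrix.mul_apply]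
      congr 1; ext i
      rw [Matrix.mul_apply, Finset.sum_mul]
      rw [Finset.sum_eq_single i]
      · simp [Matrix.diagonal_apply_eq, Matrix.star_apply, sq]; ring
      · intro j _ hj
        simp [Matrix.diagonal_apply_ne _ hj]
      · simp
    have h2 : (U * star U) v v = ∑ i, (U v i)^2 := by
      rw [Matrix.mul_apply]
      congr 1; ext i
      simp [Matrix.star_apply, sq]
    rw [h1]
    calc ∑ i, (hB.eigenvalues i)^2 * (U v i)^2
        ≤ ∑ i, 4 * (U v i)^2 := by
          apply Finset.sum_le_sum
          intro i _
          apply mul_le_mul_of_nonneg_right _ (sq_nonneg _)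
          calc (hB.eigenvalues i)^2 = |hB.eigenvalues i|^2 := (sq_abs _).symm
            _ ≤ 2^2 := by
                apply pow_le_pow_left₀ (abs_nonneg _) (hEig i)
            _ = 4 := by norm_num
      _ = 4 * ∑ i, (U v i)^2 := by rw [Finset.mul_sum]
      _ = 4 * (U * star U) v v := by rw [h2]
      _ = 4 := by rw [hUU]; simp
  -- diagonal entry equals degree
  have hfilter : (Finset.univ.filter (fun w => w ≠ v ∧ A v w ≠ 0)) =
      (Finset.univ.filter (fun w => A v w ≠ 0)) := by
    apply Finset.filter_congr
    intro w _
    simp only [ne_eq, and_iff_right_iff_imp]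
    intro h hw
    exact h (hw ▸ hdiag v)
  have hcount : ((Finset.univ.filter (fun w => w ≠ v ∧ A v w ≠ 0)).card : ℝ)
      = (B * B) v v := by
    rw [hfilter]
    have hsymmA : ∀ w, A w v = A v w := fun w => by
      exact_mod_cast (congrFun (congrFun hsymm w) v).symm
    rw [Matrix.mul_apply]
    rw [Finset.card_eq_sum_ones, Nat.cast_sum]
    rw [Finset.sum_filter]
    apply Finset.sum_congr rfl
    intro w _
    simp only [hBdef, Matrix.map_apply, hsymmA w]
    rcases hent v w with h | h | h <;> simp [h]
  have : ((Finset.univ.filter (fun w => w ≠ v ∧ A v w ≠ 0)).card : ℝ) ≤ 4 := by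
    rw [hcount]; exact hdiagBB
  exact_mod_cast this
end

section
/- Let n ≥ 2 and let S be a maximal triangle-free subgraph of 𝒟_n. If v is a vertex of S, then its conjugate v* also belongs to S. -/
/-- The `i`th standard basis vector of `ℤⁿ`. -/
def stdVec (n : ℕ) (i : Fin n) : Fin n → ℤ := Pi.single i 1

/-- Integer dot product. -/
def dotZ {n : ℕ} (u v : Fin n → ℤ) : ℤ := ∑ k, u k * v k

/-- Vertices of the signed graph `𝒟_n`: vectors `e_i ± e_j` for `i < j`. -/
def DnVertex {n : ℕ} (v : Fin n → ℤ) : Prop :=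
  ∃ i j : Fin n, i < j ∧
    (v = stdVec n i + stdVec n j ∨ v = stdVec n i - stdVec n j)

/-- Adjacency in `𝒟_n`: distinct vectors with nonzero inner product. -/
def DnAdj {n : ℕ} (u v : Fin n → ℤ) : Prop := u ≠ v ∧ dotZ u v ≠ 0

/-- A set of vertices is triangle-free if it contains no three pairwise adjacent vertices. -/
def TriangleFree {n : ℕ} (S : Set (Fin n → ℤ)) : Prop :=
  ¬ ∃ a b c, a ∈ S ∧ b ∈ S ∧ c ∈ S ∧ DnAdj a b ∧ DnAdj a c ∧ DnAdj b c

/-- `S` is a maximal triangle-free subgraph of `𝒟_n`: a triangle-free set of vertices of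
`𝒟_n` such that adjoining any further vertex of `𝒟_n` creates a triangle. -/
def MaximalTriangleFree {n : ℕ} (S : Set (Fin n → ℤ)) : Prop :=
  (∀ v ∈ S, DnVertex v) ∧ TriangleFree S ∧
    ∀ v, DnVertex v → v ∉ S → ¬ TriangleFree (insert v S)

lemma dot_plus {n : ℕ} (i j : Fin n) (a : Fin n → ℤ) :
    dotZ (stdVec n i + stdVec n j) a = a i + a j := by
  simp [dotZ, stdVec, Pi.single_apply, add_mul, ite_mul, Finset.sum_add_distrib]

lemma dot_minus {n : ℕ} (i j : Fin n) (a : Fin n → ℤ) :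
    dotZ (stdVec n i - stdVec n j) a = a i - a j := by
  simp [dotZ, stdVec, Pi.single_apply, sub_mul, ite_mul, Finset.sum_sub_distrib]

lemma dot_symm {n : ℕ} (u v : Fin n → ℤ) : dotZ u v = dotZ v u := by
  simp [dotZ, mul_comm]

set_option linter.unreachableTactic false in
set_option linter.unusedTactic false in
lemma vertex_minus {n : ℕ} {i j : Fin n} (hij : i < j) {a : Fin n → ℤ}
    (ha : DnVertex a) (h1 : a i - a j ≠ 0) (h2 : a i + a j = 0) :
    a = stdVec n i - stdVec n j := by
  obtain ⟨k, l, hkl, h | h⟩ := ha <;> subst h <;>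
    simp only [stdVec, Pi.add_apply, Pi.sub_apply, Pi.single_apply] at h1 h2 <;>
    split_ifs at h1 h2 <;>
    first
      | omega
      | (subst_vars; rfl)
      | (exfalso; simp_all only [Fin.ext_iff, Fin.lt_def]; omega)

set_option linter.unreachableTactic false in
set_option linter.unusedTactic false in
lemma vertex_plus {n : ℕ} {i j : Fin n} (hij : i < j) {a : Fin n → ℤ}
    (ha : DnVertex a) (h1 : a i + a j ≠ 0) (h2 : a i - a j = 0) :
    a = stdVec n i + stdVec n j := by
  obtain ⟨k, l, hkl, h | h⟩ := ha <;> subst h <;>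
    simp only [stdVec, Pi.add_apply, Pi.sub_apply, Pi.single_apply] at h1 h2 <;>
    split_ifs at h1 h2 <;>
    first
      | omega
      | (subst_vars; rfl)
      | (exfalso; simp_all only [Fin.ext_iff, Fin.lt_def]; omega)

/-- Key step: if `u ∈ S`, `w` is a vertex orthogonal to `u`, and every vertex other
than `w` that is non-orthogonal to `w` is also non-orthogonal to `u`, then `w ∈ S`. -/
lemma mem_of_key {n : ℕ} {S : Set (Fin n → ℤ)} (hS : MaximalTriangleFree S)
    {u w : Fin n → ℤ} (hu : u ∈ S) (hw : DnVertex w) (hdot0 : dotZ w u = 0)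
    (hkey : ∀ a, DnVertex a → dotZ w a ≠ 0 → a ≠ w → dotZ u a ≠ 0) :
    w ∈ S := by
  by_contra hns
  have htri := hS.2.2 w hw hns
  rw [TriangleFree, not_not] at htri
  obtain ⟨a, b, c, ha, hb, hc, hab, hac, hbc⟩ := htri
  -- helper: from two elements of S adjacent to w and to each other, build a triangle
  have main : ∀ x y : Fin n → ℤ, x ∈ S → y ∈ S → DnAdj w x → DnAdj w y →
      DnAdj x y → False := by
    intro x y hx hy hwx hwy hxy
    have hxv : DnVertex x := hS.1 x hx
    have hyv : DnVertex y := hS.1 y hy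
    have hxw : x ≠ w := fun h => hns (h ▸ hx)
    have hyw : y ≠ w := fun h => hns (h ▸ hy)
    have hux : dotZ u x ≠ 0 := hkey x hxv hwx.2 hxw
    have huy : dotZ u y ≠ 0 := hkey y hyv hwy.2 hyw
    have hune : u ≠ x := by
      rintro rfl
      exact hwx.2 hdot0
    have hune' : u ≠ y := by
      rintro rfl
      exact hwy.2 hdot0
    exact hS.2.1 ⟨u, x, y, hu, hx, hy, ⟨hune, hux⟩, ⟨hune', huy⟩, hxy⟩
  -- the triangle must use w, and the other two vertices lie in S
  rcases ha with rfl | ha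
  · rcases hb with rfl | hb
    · exact hab.1 rfl
    · rcases hc with rfl | hc
      · exact hac.1 rfl
      · exact main b c hb hc hab hac hbc
  · rcases hb with rfl | hb
    · rcases hc with rfl | hc
      · exact hbc.1 rfl
      · exact main a c ha hc ⟨fun h => hab.1 h.symm, fun h => hab.2 (by rwa [dot_symm])⟩
          hbc hac
    · rcases hc with rfl | hc
      · exact main a b ha hb ⟨fun h => hac.1 h.symm, fun h => hac.2 (by rwa [dot_symm])⟩
          ⟨fun h => hbc.1 h.symm, fun h => hbc.2 (by rwa [dot_symm])⟩ hab
      · exact hS.2.1 ⟨a, b, c, ha, hb, hc, hab, hac, hbc⟩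

/-- In a maximal triangle-free subgraph of `𝒟_n`, the conjugate of
every vertex is also in the subgraph: `e_i + e_j ∈ S ↔ e_i − e_j ∈ S`. -/
theorem conjugate_mem_maximal_triangle_free
    {n : ℕ} (hn : 2 ≤ n) (S : Set (Fin n → ℤ))
    (hS : MaximalTriangleFree S) :
    ∀ i j : Fin n, i < j →
      (stdVec n i + stdVec n j ∈ S ↔ stdVec n i - stdVec n j ∈ S) := by
  intro i j hij
  have hd0 : dotZ (stdVec n i - stdVec n j) (stdVec n i + stdVec n j) = 0 := by
    rw [dot_minus]
    simp [stdVec, Pi.single_apply, (Fin.lt_iff_le_and_ne.mp hij).2]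
  have hd0' : dotZ (stdVec n i + stdVec n j) (stdVec n i - stdVec n j) = 0 := by
    rw [dot_symm]; exact hd0
  constructor
  · intro hv
    refine mem_of_key hS hv ⟨i, j, hij, Or.inr rfl⟩ hd0 ?_
    intro a hav hwa haw
    rw [dot_plus]
    intro h2
    rw [dot_minus] at hwa
    exact haw (vertex_minus hij hav hwa h2)
  · intro hv
    refine mem_of_key hS hv ⟨i, j, hij, Or.inl rfl⟩ hd0' ?_
    intro a hav hwa haw
    rw [dot_minus]
    intro h2
    rw [dot_plus] at hwa
    exact haw (vertex_plus hij hav hwa h2)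
end

section
/- Let n ≥ 2 and let S be a maximal triangle-free subgraph of 𝒟_n. Then for each i ∈ {1,…,n}, the basis vector e_i is included in at most four vertices of S: the number of vertices v ∈ S with ⟨v, e_i⟩ ≠ 0 is at most 4. -/
section Aux

lemma stdVec_apply {n : ℕ} (a m : Fin n) : stdVec n a m = if m = a then 1 else 0 := by
  simp [stdVec, Pi.single_apply]

lemma dotZ_stdVec_right {n : ℕ} (v : Fin n → ℤ) (a : Fin n) :
    dotZ v (stdVec n a) = v a := by
  simp [dotZ, stdVec, Pi.single_apply, mul_ite]

lemma dotZ_stdVec_left {n : ℕ} (v : Fin n → ℤ) (a : Fin n) :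
    dotZ (stdVec n a) v = v a := by
  simp [dotZ, stdVec, Pi.single_apply, ite_mul]

lemma dotZ_add_right {n : ℕ} (u v w : Fin n → ℤ) :
    dotZ w (u + v) = dotZ w u + dotZ w v := by
  simp [dotZ, mul_add, Finset.sum_add_distrib]

lemma dotZ_sub_right {n : ℕ} (u v w : Fin n → ℤ) :
    dotZ w (u - v) = dotZ w u - dotZ w v := by
  simp [dotZ, mul_sub, Finset.sum_sub_distrib]

/-- The (at most two) vertices of `𝒟_n` supported on `{i, j}`. -/
def pairSet (n : ℕ) (i j : Fin n) : Set (Fin n → ℤ) :=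
  if i < j then {stdVec n i + stdVec n j, stdVec n i - stdVec n j}
  else {stdVec n j + stdVec n i, stdVec n j - stdVec n i}

lemma pairSet_finite {n : ℕ} (i j : Fin n) : (pairSet n i j).Finite := by
  unfold pairSet
  split <;> exact (Set.finite_singleton _).insert _

lemma pairSet_ncard {n : ℕ} (i j : Fin n) : (pairSet n i j).ncard ≤ 2 := by
  unfold pairSet
  split <;>
    exact le_trans (Set.ncard_insert_le _ _) (by simp)

lemma pairSet_apply_i {n : ℕ} {i j : Fin n} {u : Fin n → ℤ}
    (hu : u ∈ pairSet n i j) (hij : j ≠ i) : u i ≠ 0 := by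
  unfold pairSet at hu
  split at hu <;> rcases hu with rfl | rfl <;>
    simp [stdVec_apply, hij, Ne.symm hij]

lemma pairSet_apply_j {n : ℕ} {i j : Fin n} {u : Fin n → ℤ}
    (hu : u ∈ pairSet n i j) (hij : j ≠ i) : u j ≠ 0 := by
  unfold pairSet at hu
  split at hu <;> rcases hu with rfl | rfl <;>
    simp [stdVec_apply, hij]

lemma pairSet_apply_other {n : ℕ} {i j m : Fin n} {u : Fin n → ℤ}
    (hu : u ∈ pairSet n i j) (hmi : m ≠ i) (hmj : m ≠ j) : u m = 0 := by
  unfold pairSet at hu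
  split at hu <;> rcases hu with rfl | rfl <;>
    simp [stdVec_apply, hmi, hmj]

/-- Vertices from pair sets with distinct second indices are adjacent. -/
lemma pairSet_adj {n : ℕ} {i j k : Fin n} {u v : Fin n → ℤ}
    (hu : u ∈ pairSet n i j) (hv : v ∈ pairSet n i k)
    (hji : j ≠ i) (hki : k ≠ i) (hjk : j ≠ k) : DnAdj u v := by
  constructor
  · intro h
    apply pairSet_apply_j hu hji
    rw [h]
    exact pairSet_apply_other hv hji hjk
  · have huk : u k = 0 := pairSet_apply_other hu hki (Ne.symm hjk)
    have hui : u i ≠ 0 := pairSet_apply_i hu hji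
    unfold pairSet at hv
    split at hv <;> rcases hv with rfl | rfl <;>
      simp [dotZ_add_right, dotZ_sub_right, dotZ_stdVec_right, huk, hui]

/-- Every vertex of `𝒟_n` including `e_i` lies in some `pairSet n i j`. -/
lemma vertex_mem_pairSet {n : ℕ} {v : Fin n → ℤ} {i : Fin n}
    (hv : DnVertex v) (hvi : v i ≠ 0) :
    ∃ j, j ≠ i ∧ v ∈ pairSet n i j := by
  obtain ⟨a, b, hab, hform⟩ := hv
  have hiab : i = a ∨ i = b := by
    by_contra h
    push_neg at h
    rcases hform with rfl | rfl <;>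
      simp [stdVec_apply, h.1, h.2] at hvi
  rcases hiab with rfl | rfl
  · refine ⟨b, (ne_of_lt hab).symm, ?_⟩
    simp only [pairSet, if_pos hab, Set.mem_insert_iff, Set.mem_singleton_iff]
    tauto
  · refine ⟨a, ne_of_lt hab, ?_⟩
    simp only [pairSet, if_neg (not_lt_of_gt hab), Set.mem_insert_iff, Set.mem_singleton_iff]
    tauto

end Aux

/-- In a maximal triangle-free subgraph `S` of `𝒟_n`, each basis
vector `e_i` is included in at most four vertices of `S`. -/
theorem basis_vector_included_at_most_four_times
    {n : ℕ} (hn : 2 ≤ n) (S : Set (Fin n → ℤ))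
    (hS : MaximalTriangleFree S) (i : Fin n) :
    Set.ncard {v ∈ S | dotZ v (stdVec n i) ≠ 0} ≤ 4 := by
  set T : Set (Fin n → ℤ) := {v ∈ S | dotZ v (stdVec n i) ≠ 0} with hT
  have hTmem : ∀ v ∈ T, ∃ j, j ≠ i ∧ v ∈ pairSet n i j := by
    intro v hv
    exact vertex_mem_pairSet (hS.1 v hv.1) (by rw [← dotZ_stdVec_right v i]; exact hv.2)
  rcases Set.eq_empty_or_nonempty T with hTe | ⟨v0, hv0⟩
  · simp [hTe]
  obtain ⟨j0, hj0i, hv0P⟩ := hTmem v0 hv0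
  by_cases h1 : ∃ v1 ∈ T, ∃ j1, j1 ≠ i ∧ j1 ≠ j0 ∧ v1 ∈ pairSet n i j1
  · obtain ⟨v1, hv1, j1, hj1i, hj1j0, hv1P⟩ := h1
    have hsub : T ⊆ pairSet n i j0 ∪ pairSet n i j1 := by
      intro v hv
      obtain ⟨j, hji, hvP⟩ := hTmem v hv
      by_cases hj0 : j = j0
      · exact Or.inl (hj0 ▸ hvP)
      by_cases hj1 : j = j1
      · exact Or.inr (hj1 ▸ hvP)
      exfalso
      exact hS.2.1 ⟨v0, v1, v, hv0.1, hv1.1, hv.1,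
        pairSet_adj hv0P hv1P hj0i hj1i (Ne.symm hj1j0),
        pairSet_adj hv0P hvP hj0i hji (Ne.symm hj0),
        pairSet_adj hv1P hvP hj1i hji (Ne.symm hj1)⟩
    calc T.ncard ≤ (pairSet n i j0 ∪ pairSet n i j1).ncard :=
          Set.ncard_le_ncard hsub ((pairSet_finite i j0).union (pairSet_finite i j1))
      _ ≤ (pairSet n i j0).ncard + (pairSet n i j1).ncard := Set.ncard_union_le _ _
      _ ≤ 4 := by
          have := pairSet_ncard i j0
          have := pairSet_ncard i j1
          omega
  · push_neg at h1
    have hsub : T ⊆ pairSet n i j0 := by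
      intro v hv
      obtain ⟨j, hji, hvP⟩ := hTmem v hv
      have : j = j0 := by
        by_contra hne
        exact (h1 v hv j hji hne) hvP
      exact this ▸ hvP
    calc T.ncard ≤ (pairSet n i j0).ncard := Set.ncard_le_ncard hsub (pairSet_finite i j0)
      _ ≤ 4 := le_trans (pairSet_ncard i j0) (by omega)
end

section
/- Let m ≥ 4 and let e_1,…,e_m be the standard orthonormal basis of ℝᵐ. Consider the 2m vectors w_1 = e_1+e_2, w_2 = e_2+e_3, …, w_{m−1} = e_{m−1}+e_m, w_m = e_1+e_m, w_{m+1} = e_1−e_2, …, w_{2m−1} = e_{m−1}−e_m, w_{2m} = e_1−e_m, and let A be the 2m×2m integer matrix with A s t = ⟨w_s, w_t⟩ for s ≠ t and A s s = 0 (so A + 2I is the Gram matrix of the w_s). Then A² = 4I, every eigenvalue of A is 2 or −2, and the characteristic polynomial of A is (X² − 4)ᵐ = (X−2)ᵐ (X+2)ᵐ. In particular this toral tesselation T_{2m} is a cyclotomic signed graph. -/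
open Polynomial Matrix

/-- The `2m` vectors of the toral tesselation `T_{2m}` (coordinates in `ℤᵐ`):
`w_s = e_s + e_{s+1}` for `0 ≤ s ≤ m−2`, `w_{m−1} = e_{m-1} + e_0`,
`w_{m+t} = e_t − e_{t+1}` for `0 ≤ t ≤ m−2`, and `w_{2m−1} = e_0 − e_{m−1}`. -/
def torW (m : ℕ) (s : Fin (2 * m)) : Fin m → ℤ := fun j =>
  if (s : ℕ) < m then
    (if (j : ℕ) = (s : ℕ) then 1 else 0) +
      (if (j : ℕ) = ((s : ℕ) + 1) % m then 1 else 0)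
  else
    if (s : ℕ) - m < m - 1 then
      (if (j : ℕ) = (s : ℕ) - m then 1 else 0) -
        (if (j : ℕ) = (s : ℕ) - m + 1 then 1 else 0)
    else
      (if (j : ℕ) = 0 then 1 else 0) - (if (j : ℕ) = m - 1 then 1 else 0)

/-- The adjacency matrix of `T_{2m}`: off-diagonal entries are the inner products
`⟨w_s, w_t⟩`, diagonal entries are `0` (so `A + 2I` is the Gram matrix of the `w_s`). -/
def torA (m : ℕ) : Matrix (Fin (2 * m)) (Fin (2 * m)) ℤ :=
  fun s t => if s = t then 0 else ∑ j, torW m s j * torW m t j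

/-! ### Auxiliary lemmas -/

/-- `torW` as a function of a natural number index. -/
def wfun (m : ℕ) (j : Fin m) (u : ℕ) : ℤ :=
  if u < m then
    (if (j : ℕ) = u then 1 else 0) + (if (j : ℕ) = (u + 1) % m then 1 else 0)
  else
    if u - m < m - 1 then
      (if (j : ℕ) = u - m then 1 else 0) - (if (j : ℕ) = u - m + 1 then 1 else 0)
    else
      (if (j : ℕ) = 0 then 1 else 0) - (if (j : ℕ) = m - 1 then 1 else 0)

lemma sum_dd (m a b : ℕ) (ha : a < m) :
    ∑ u ∈ Finset.range m, ((if a = u then (1 : ℤ) else 0) * (if b = u then 1 else 0)) =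
      if b = a then 1 else 0 := by
  simp only [ite_mul, one_mul, zero_mul, Finset.sum_ite_eq, Finset.mem_range, ha, if_true]

lemma sum_dd' (m a b : ℕ) (ha : a < m) :
    ∑ j : Fin m, ((if (j : ℕ) = a then (1 : ℤ) else 0) * (if (j : ℕ) = b then 1 else 0)) =
      if a = b then 1 else 0 := by
  have hstep : ∑ j : Fin m, ((if (j : ℕ) = a then (1 : ℤ) else 0) * (if (j : ℕ) = b then 1 else 0))
      = ∑ u ∈ Finset.range m, ((if u = a then (1 : ℤ) else 0) * (if u = b then 1 else 0)) :=
    Fin.sum_univ_eq_sum_range (fun u => (if u = a then (1 : ℤ) else 0) * (if u = b then 1 else 0)) m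
  rw [hstep]
  simp only [ite_mul, one_mul, zero_mul, Finset.sum_ite_eq', Finset.mem_range, ha, if_true]

lemma sum_range_shift (m : ℕ) (hm : 0 < m) (g : ℕ → ℤ) :
    ∑ u ∈ Finset.range m, g ((u + 1) % m) = ∑ u ∈ Finset.range m, g u := by
  apply Finset.sum_nbij' (i := fun u => (u + 1) % m) (j := fun u => (u + (m - 1)) % m)
  · intro u hu
    exact Finset.mem_range.mpr (Nat.mod_lt _ hm)
  · intro u hu
    exact Finset.mem_range.mpr (Nat.mod_lt _ hm)
  · intro u hu
    rw [Finset.mem_range] at hu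
    show ((u + 1) % m + (m - 1)) % m = u
    rw [Nat.mod_add_mod, show u + 1 + (m - 1) = u + m by omega, Nat.add_mod_right,
      Nat.mod_eq_of_lt hu]
  · intro u hu
    rw [Finset.mem_range] at hu
    show ((u + (m - 1)) % m + 1) % m = u
    rw [Nat.mod_add_mod, show u + (m - 1) + 1 = u + m by omega, Nat.add_mod_right,
      Nat.mod_eq_of_lt hu]
  · intro u hu
    rfl

lemma wtw (m : ℕ) (hm : 2 ≤ m) (j k : Fin m) :
    ∑ s : Fin (2 * m), torW m s j * torW m s k = if j = k then 4 else 0 := by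
  have h0 : 0 < m := by omega
  have hstep : ∑ s : Fin (2 * m), torW m s j * torW m s k
      = ∑ u ∈ Finset.range (2 * m), wfun m j u * wfun m k u :=
    Fin.sum_univ_eq_sum_range (fun u => wfun m j u * wfun m k u) (2 * m)
  rw [hstep, two_mul, Finset.sum_range_add, ← Finset.sum_add_distrib]
  have hterm : ∀ u ∈ Finset.range m,
      wfun m j u * wfun m k u + wfun m j (m + u) * wfun m k (m + u)
        = 2 * ((if (j : ℕ) = u then (1 : ℤ) else 0) * (if (k : ℕ) = u then 1 else 0))
          + 2 * ((if (j : ℕ) = (u + 1) % m then (1 : ℤ) else 0) *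
              (if (k : ℕ) = (u + 1) % m then 1 else 0)) := by
    intro u hu
    rw [Finset.mem_range] at hu
    have h1 : ¬ (m + u < m) := by omega
    have h2 : m + u - m = u := by omega
    by_cases hcase : u < m - 1
    · have hmod : (u + 1) % m = u + 1 := Nat.mod_eq_of_lt (by omega)
      have e1 : ∀ i : Fin m, wfun m i u
          = (if (i : ℕ) = u then (1 : ℤ) else 0) + (if (i : ℕ) = u + 1 then 1 else 0) := by
        intro i; unfold wfun; rw [if_pos hu, hmod]
      have e2 : ∀ i : Fin m, wfun m i (m + u)
          = (if (i : ℕ) = u then (1 : ℤ) else 0) - (if (i : ℕ) = u + 1 then 1 else 0) := by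
        intro i; unfold wfun; rw [if_neg h1, h2, if_pos hcase]
      rw [e1 j, e1 k, e2 j, e2 k, hmod]
      ring
    · have hu' : u = m - 1 := by omega
      have hmod : (u + 1) % m = 0 := by
        rw [hu', show m - 1 + 1 = m by omega, Nat.mod_self]
      have e1 : ∀ i : Fin m, wfun m i u
          = (if (i : ℕ) = m - 1 then (1 : ℤ) else 0) + (if (i : ℕ) = 0 then 1 else 0) := by
        intro i; unfold wfun; rw [if_pos hu, hmod, hu']
      have e2 : ∀ i : Fin m, wfun m i (m + u)
          = (if (i : ℕ) = 0 then (1 : ℤ) else 0) - (if (i : ℕ) = m - 1 then 1 else 0) := by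
        intro i; unfold wfun
        rw [if_neg h1, h2, if_neg (by omega : ¬ (u < m - 1))]
      rw [e1 j, e1 k, e2 j, e2 k, hmod, hu']
      ring
  rw [Finset.sum_congr rfl hterm, Finset.sum_add_distrib, ← Finset.mul_sum, ← Finset.mul_sum]
  rw [sum_range_shift m h0
    (fun u => (if (j : ℕ) = u then (1 : ℤ) else 0) * (if (k : ℕ) = u then 1 else 0))]
  rw [sum_dd m (j : ℕ) (k : ℕ) j.isLt]
  by_cases h : j = k
  · rw [if_pos h, if_pos (by rw [h])]
    norm_num
  · rw [if_neg h, if_neg (fun hk => h (Fin.ext hk.symm))]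
    norm_num

lemma diag_aux (m a b : ℕ) (ha : a < m) (hb : b < m) (hab : a ≠ b) (ε : ℤ) (hε : ε * ε = 1) :
    ∑ j : Fin m, (((if (j : ℕ) = a then (1 : ℤ) else 0) + ε * (if (j : ℕ) = b then 1 else 0)) *
      ((if (j : ℕ) = a then (1 : ℤ) else 0) + ε * (if (j : ℕ) = b then 1 else 0))) = 2 := by
  have key : ∀ j : Fin m,
      (((if (j : ℕ) = a then (1 : ℤ) else 0) + ε * (if (j : ℕ) = b then 1 else 0)) *
        ((if (j : ℕ) = a then (1 : ℤ) else 0) + ε * (if (j : ℕ) = b then 1 else 0)))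
      = ((if (j : ℕ) = a then (1 : ℤ) else 0) * (if (j : ℕ) = a then 1 else 0))
        + ε * ((if (j : ℕ) = a then (1 : ℤ) else 0) * (if (j : ℕ) = b then 1 else 0))
        + ε * ((if (j : ℕ) = b then (1 : ℤ) else 0) * (if (j : ℕ) = a then 1 else 0))
        + (ε * ε) * ((if (j : ℕ) = b then (1 : ℤ) else 0) * (if (j : ℕ) = b then 1 else 0)) := by
    intro j; ring
  rw [Finset.sum_congr rfl (fun j _ => key j)]
  simp only [Finset.sum_add_distrib, ← Finset.mul_sum]
  rw [sum_dd' m a a ha, sum_dd' m a b ha, sum_dd' m b a hb, sum_dd' m b b hb]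
  rw [if_pos rfl, if_pos rfl, if_neg hab, if_neg (Ne.symm hab), hε]
  ring

lemma wdiag (m : ℕ) (hm : 2 ≤ m) (s : Fin (2 * m)) :
    ∑ j : Fin m, torW m s j * torW m s j = 2 := by
  by_cases hs : (s : ℕ) < m
  · have hb : ((s : ℕ) + 1) % m < m := Nat.mod_lt _ (by omega)
    have hab : (s : ℕ) ≠ ((s : ℕ) + 1) % m := by
      by_cases hc : (s : ℕ) + 1 < m
      · rw [Nat.mod_eq_of_lt hc]; omega
      · have h' : (s : ℕ) = m - 1 := by omega
        rw [h', show m - 1 + 1 = m by omega, Nat.mod_self]; omega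
    have hd := diag_aux m (s : ℕ) (((s : ℕ) + 1) % m) hs hb hab 1 (by norm_num)
    rw [← hd]
    apply Finset.sum_congr rfl
    intro j _
    unfold torW
    rw [if_pos hs]
    ring
  · by_cases hc : (s : ℕ) - m < m - 1
    · have ha : (s : ℕ) - m < m := by omega
      have hb : (s : ℕ) - m + 1 < m := by omega
      have hab : (s : ℕ) - m ≠ (s : ℕ) - m + 1 := by omega
      have hd := diag_aux m ((s : ℕ) - m) ((s : ℕ) - m + 1) ha hb hab (-1) (by norm_num)
      rw [← hd]
      apply Finset.sum_congr rfl
      intro j _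
      unfold torW
      rw [if_neg hs, if_pos hc]
      ring
    · have hab : (0 : ℕ) ≠ m - 1 := by omega
      have hd := diag_aux m 0 (m - 1) (by omega) (by omega) hab (-1) (by norm_num)
      rw [← hd]
      apply Finset.sum_congr rfl
      intro j _
      unfold torW
      rw [if_neg hs, if_neg hc]
      ring

lemma torA_symm (m : ℕ) : (torA m)ᵀ = torA m := by
  ext s t
  rw [Matrix.transpose_apply]
  unfold torA
  by_cases h : s = t
  · rw [if_pos h.symm, if_pos h]
  · rw [if_neg (fun hh => h hh.symm), if_neg h]
    exact Finset.sum_congr rfl fun j _ => mul_comm _ _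

lemma torA_sq (m : ℕ) (hm : 2 ≤ m) :
    torA m * torA m = (4 : ℤ) • (1 : Matrix (Fin (2 * m)) (Fin (2 * m)) ℤ) := by
  set W : Matrix (Fin (2 * m)) (Fin m) ℤ := Matrix.of fun s j => torW m s j with hW
  have h4 : Wᵀ * W = (4 : ℤ) • 1 := by
    ext j k
    rw [Matrix.mul_apply]
    simp only [hW, Matrix.transpose_apply, Matrix.of_apply]
    rw [wtw m hm j k]
    simp [Matrix.one_apply, apply_ite]
  have hG : torA m = W * Wᵀ - (2 : ℤ) • 1 := by
    ext s t
    unfold torA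
    rw [Matrix.sub_apply, Matrix.mul_apply, Matrix.smul_apply, Matrix.one_apply]
    by_cases h : s = t
    · subst h
      rw [if_pos rfl, if_pos rfl]
      simp only [hW, Matrix.transpose_apply, Matrix.of_apply]
      rw [wdiag m hm s]
      norm_num
    · rw [if_neg h, if_neg h]
      simp only [hW, Matrix.transpose_apply, Matrix.of_apply, smul_zero, sub_zero]
  have hGG : (W * Wᵀ) * (W * Wᵀ) = (4 : ℤ) • (W * Wᵀ) := by
    rw [Matrix.mul_assoc W Wᵀ (W * Wᵀ), ← Matrix.mul_assoc Wᵀ W Wᵀ, h4, Matrix.smul_mul,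
      Matrix.one_mul, Matrix.mul_smul]
  rw [hG, sub_mul, mul_sub, mul_sub, hGG]
  simp only [Matrix.smul_mul, Matrix.mul_smul, Matrix.one_mul, Matrix.mul_one, smul_smul]
  rw [show ((2 : ℤ) * 2) = 4 by norm_num]
  abel

lemma charpoly_units_conj {n : Type*} [Fintype n] [DecidableEq n] {R : Type*} [CommRing R]
    (U V B : Matrix n n R) (hUV : U * V = 1) :
    (U * B * V).charpoly = B.charpoly := by
  have hmapUV : (U.map (C : R →+* R[X])) * (V.map (C : R →+* R[X])) = 1 := by
    rw [← Matrix.map_mul, hUV, Matrix.map_one _ (map_zero C) (map_one C)]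
  have key : Matrix.charmatrix (U * B * V)
      = (U.map (C : R →+* R[X])) * Matrix.charmatrix B * (V.map (C : R →+* R[X])) := by
    rw [Matrix.charmatrix, Matrix.charmatrix, RingHom.mapMatrix_apply, RingHom.mapMatrix_apply]
    rw [mul_sub, sub_mul]
    congr 1
    · have hcomm := (Matrix.scalar_commute (X : R[X]) (fun r' => mul_comm _ _)
        (U.map (C : R →+* R[X]))).eq
      rw [← hcomm, mul_assoc, hmapUV, mul_one]
    · rw [Matrix.map_mul, Matrix.map_mul]
  rw [Matrix.charpoly, Matrix.charpoly, key, Matrix.det_mul, Matrix.det_mul, mul_right_comm,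
    ← Matrix.det_mul, hmapUV, Matrix.det_one, one_mul]

/-- For `m ≥ 4`, the toral tesselation `T_{2m}` satisfies `A² = 4I`,
all its eigenvalues are `±2`, its characteristic polynomial is `(X−2)ᵐ(X+2)ᵐ`,
and in particular it is a cyclotomic signed graph. -/
theorem toral_tesselation_cyclotomic (m : ℕ) (hm : 4 ≤ m) :
    torA m * torA m = (4 : ℤ) • (1 : Matrix (Fin (2 * m)) (Fin (2 * m)) ℤ) ∧
    (∀ μ ∈ spectrum ℝ ((torA m).map ((↑) : ℤ → ℝ)), μ = 2 ∨ μ = -2) ∧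
    (torA m).charpoly = (X - 2) ^ m * (X + 2) ^ m ∧
    IsCyclo (torA m) := by
  classical
  have hm2 : 2 ≤ m := by omega
  have h2 := torA_sq m hm2
  set B : Matrix (Fin (2 * m)) (Fin (2 * m)) ℝ := (torA m).map ((↑) : ℤ → ℝ) with hBdef
  have hB2 : B * B = (4 : ℝ) • 1 := by
    have hmul : ((torA m * torA m).map ((↑) : ℤ → ℝ)) = B * B :=
      Matrix.map_mul (f := Int.castRingHom ℝ)
    rw [← hmul, h2]
    ext i j
    rw [Matrix.map_apply, Matrix.smul_apply, Matrix.smul_apply, Matrix.one_apply,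
      Matrix.one_apply]
    split_ifs <;> simp
  have hspec : ∀ μ ∈ spectrum ℝ B, μ = 2 ∨ μ = -2 := by
    intro μ hμ
    by_contra hc
    push_neg at hc
    obtain ⟨hc1, hc2⟩ := hc
    have hne : μ ^ 2 - 4 ≠ 0 := by
      intro h
      have hfac : (μ - 2) * (μ + 2) = 0 := by nlinarith [h]
      rcases mul_eq_zero.mp hfac with h' | h'
      · exact hc1 (by linarith)
      · exact hc2 (by linarith)
    rw [spectrum.mem_iff] at hμ
    apply hμ
    rw [Algebra.algebraMap_eq_smul_one, isUnit_iff_exists]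
    have key : (μ • 1 - B) * (μ • (1 : Matrix (Fin (2 * m)) (Fin (2 * m)) ℝ) + B)
        = (μ ^ 2 - 4) • 1 := by
      have hexp : (μ • 1 - B) * (μ • (1 : Matrix (Fin (2 * m)) (Fin (2 * m)) ℝ) + B)
          = (μ ^ 2) • (1 : Matrix (Fin (2 * m)) (Fin (2 * m)) ℝ) - B * B := by
        rw [sub_mul, mul_add, mul_add]
        simp only [smul_mul_assoc, mul_smul_comm, one_mul, mul_one, smul_smul]
        rw [show μ * μ = μ ^ 2 by ring]
        abel
      rw [hexp, hB2, ← sub_smul]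
    have key2 : (μ • (1 : Matrix (Fin (2 * m)) (Fin (2 * m)) ℝ) + B) * (μ • 1 - B)
        = (μ ^ 2 - 4) • 1 := by
      have hexp : (μ • (1 : Matrix (Fin (2 * m)) (Fin (2 * m)) ℝ) + B) * (μ • 1 - B)
          = (μ ^ 2) • (1 : Matrix (Fin (2 * m)) (Fin (2 * m)) ℝ) - B * B := by
        rw [add_mul, mul_sub, mul_sub]
        simp only [smul_mul_assoc, mul_smul_comm, one_mul, mul_one, smul_smul]
        rw [show μ * μ = μ ^ 2 by ring]
        abel
      rw [hexp, hB2, ← sub_smul]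
    refine ⟨(μ ^ 2 - 4)⁻¹ • (μ • 1 + B), ?_, ?_⟩
    · rw [mul_smul_comm, key, smul_smul, inv_mul_cancel₀ hne, one_smul]
    · rw [smul_mul_assoc, key2, smul_smul, inv_mul_cancel₀ hne, one_smul]
  have hH : B.IsHermitian := by
    show Bᴴ = B
    ext i j
    rw [Matrix.conjTranspose_apply, star_trivial, hBdef, Matrix.map_apply, Matrix.map_apply]
    congr 1
    exact (congrFun (congrFun (torA_symm m) j) i).symm
  have hd2 : ∀ i, hH.eigenvalues i = 2 ∨ hH.eigenvalues i = -2 :=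
    fun i => hspec _ (hH.eigenvalues_mem_spectrum_real i)
  have hUV : (hH.eigenvectorUnitary : Matrix (Fin (2 * m)) (Fin (2 * m)) ℝ)
      * star (hH.eigenvectorUnitary : Matrix (Fin (2 * m)) (Fin (2 * m)) ℝ) = 1 :=
    Matrix.mem_unitaryGroup_iff.mp hH.eigenvectorUnitary.2
  have hVU : star (hH.eigenvectorUnitary : Matrix (Fin (2 * m)) (Fin (2 * m)) ℝ)
      * (hH.eigenvectorUnitary : Matrix (Fin (2 * m)) (Fin (2 * m)) ℝ) = 1 :=
    Matrix.mem_unitaryGroup_iff'.mp hH.eigenvectorUnitary.2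
  have hDiagEq : (Matrix.diagonal (RCLike.ofReal ∘ hH.eigenvalues) : Matrix (Fin (2 * m)) (Fin (2 * m)) ℝ)
      = Matrix.diagonal hH.eigenvalues := by
    congr 1
  have hcpB : B.charpoly = ∏ i, (X - C (hH.eigenvalues i)) := by
    conv_lhs => rw [hH.spectral_theorem]
    rw [Unitary.conjStarAlgAut_apply, hDiagEq, charpoly_units_conj _ _ _ hUV]
    rw [Matrix.charpoly_of_upperTriangular _ (Matrix.blockTriangular_diagonal hH.eigenvalues)]
    apply Finset.prod_congr rfl
    intro i _
    rw [Matrix.diagonal_apply_eq]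
  have htrB : B.trace = 0 := by
    unfold Matrix.trace
    apply Finset.sum_eq_zero
    intro i _
    simp only [Matrix.diag_apply, hBdef, Matrix.map_apply]
    unfold torA
    rw [if_pos rfl]
    norm_num
  have htrd : ∑ i, hH.eigenvalues i = 0 := by
    have h' : B.trace = ∑ i, hH.eigenvalues i := by
      conv_lhs => rw [hH.spectral_theorem]
      rw [Unitary.conjStarAlgAut_apply, hDiagEq, Matrix.trace_mul_cycle, hVU, one_mul, Matrix.trace_diagonal]
    rw [← h', htrB]
  set S : Finset (Fin (2 * m)) := Finset.univ.filter (fun i => hH.eigenvalues i = 2) with hS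
  set T : Finset (Fin (2 * m)) := Finset.univ.filter (fun i => ¬ hH.eigenvalues i = 2) with hT
  have hsum1 : ∑ i ∈ S, hH.eigenvalues i = (S.card : ℝ) * 2 := by
    rw [Finset.sum_congr rfl (fun i hi => (Finset.mem_filter.mp hi).2)]
    rw [Finset.sum_const, nsmul_eq_mul]
  have hsum2 : ∑ i ∈ T, hH.eigenvalues i = (T.card : ℝ) * (-2) := by
    rw [Finset.sum_congr rfl (fun i hi =>
      (hd2 i).resolve_left (Finset.mem_filter.mp hi).2)]
    rw [Finset.sum_const, nsmul_eq_mul]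
  have hcards : S.card + T.card = 2 * m := by
    rw [hS, hT, Finset.card_filter_add_card_filter_not, Finset.card_univ,
      Fintype.card_fin]
  have hScard : S.card = m := by
    have hsplit : ∑ i ∈ S, hH.eigenvalues i + ∑ i ∈ T, hH.eigenvalues i = 0 := by
      rw [hS, hT, Finset.sum_filter_add_sum_filter_not]
      exact htrd
    rw [hsum1, hsum2] at hsplit
    have hST : (S.card : ℝ) = (T.card : ℝ) := by linarith
    have hST' : S.card = T.card := Nat.cast_injective hST
    omega
  have hTcard : T.card = m := by omega
  have hprod : ∏ i, (X - C (hH.eigenvalues i)) = ((X - 2) ^ m * (X + 2) ^ m : ℝ[X]) := by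
    rw [← Finset.prod_filter_mul_prod_filter_not Finset.univ (fun i => hH.eigenvalues i = 2)
      (fun i => X - C (hH.eigenvalues i)), ← hS, ← hT]
    congr 1
    · have h1 : ∀ i ∈ S, X - C (hH.eigenvalues i) = ((X - 2 : ℝ[X])) := by
        intro i hi
        rw [(Finset.mem_filter.mp hi).2, map_ofNat]
      rw [Finset.prod_congr rfl h1, Finset.prod_const, hScard]
    · have h1 : ∀ i ∈ T, X - C (hH.eigenvalues i) = ((X + 2 : ℝ[X])) := by
        intro i hi
        rw [(hd2 i).resolve_left (Finset.mem_filter.mp hi).2, map_neg, map_ofNat, sub_neg_eq_add]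
      rw [Finset.prod_congr rfl h1, Finset.prod_const, hTcard]
  have hcpZ : (torA m).charpoly = (X - 2) ^ m * (X + 2) ^ m := by
    have hinj := Polynomial.map_injective (Int.castRingHom ℝ) Int.cast_injective
    apply hinj
    rw [← Matrix.charpoly_map (torA m) (Int.castRingHom ℝ)]
    rw [show (torA m).map ⇑(Int.castRingHom ℝ) = B from rfl]
    rw [hcpB, hprod]
    simp [Polynomial.map_mul, Polynomial.map_pow, Polynomial.map_sub, Polynomial.map_add,
      Polynomial.map_X, Polynomial.map_ofNat]
  refine ⟨h2, hspec, hcpZ, ?_⟩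
  intro μ hμ
  rcases hspec μ hμ with h | h <;> rw [h] <;> norm_num
end

section
/- Let A be a cyclotomic charged signed graph containing three distinct vertices v, w, x such that v and w are neutral (A v v = A w w = 0), v and w are not adjacent (A v w = 0), x is charged (A x x ≠ 0), and x is adjacent to both v and w (A v x ≠ 0 and A w x ≠ 0). Then v and w have the same neighbours: for every vertex y with y ≠ v and y ≠ w, A y v ≠ 0 if and only if A y w ≠ 0. -/
open Matrix

/-- The key analytic fact: a cyclotomic symmetric matrix `B` satisfies `‖Bz‖² ≤ 4‖z‖²`. -/
lemma cyclo_quad {n : ℕ} (B : Matrix (Fin n) (Fin n) ℝ) (hB : B.IsHermitian)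
    (hbound : ∀ i, |hB.eigenvalues i| ≤ 2) (z : Fin n → ℝ) :
    (B *ᵥ z) ⬝ᵥ (B *ᵥ z) ≤ 4 * (z ⬝ᵥ z) := by
  set U : Matrix (Fin n) (Fin n) ℝ := (IsHermitian.eigenvectorUnitary hB : Matrix (Fin n) (Fin n) ℝ) with hU
  set D : Matrix (Fin n) (Fin n) ℝ := diagonal (RCLike.ofReal ∘ hB.eigenvalues) with hD
  have hUU : U * star U = 1 := (Matrix.mem_unitaryGroup_iff).mp (IsHermitian.eigenvectorUnitary hB).2
  have hU'U : star U * U = 1 := (Matrix.mem_unitaryGroup_iff').mp (IsHermitian.eigenvectorUnitary hB).2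
  have hsp : B = U * D * star U := hB.spectral_theorem
  set g : Fin n → ℝ := fun i => 4 - hB.eigenvalues i * hB.eigenvalues i with hg
  have hgd : diagonal g = (4:ℝ) • (1 : Matrix (Fin n) (Fin n) ℝ) - D * D := by
    rw [hD, diagonal_mul_diagonal, Matrix.smul_one_eq_diagonal, ← diagonal_sub]
    congr 1
  have hmul : (U * D * star U) * (U * D * star U) = U * (D * D) * star U := by
    simp only [mul_assoc]
    rw [← mul_assoc (star U) U (D * star U), hU'U, one_mul]
  have key : (4:ℝ) • (1 : Matrix (Fin n) (Fin n) ℝ) - B * B = U * diagonal g * star U := by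
    rw [hgd, hsp, hmul, Matrix.mul_sub, Matrix.sub_mul]
    congr 1
    rw [mul_smul_comm, mul_one, smul_mul_assoc, hUU]
  have hPSD : PosSemidef ((4:ℝ) • (1 : Matrix (Fin n) (Fin n) ℝ) - B * B) := by
    rw [key]
    have hdiag : PosSemidef (diagonal g) := by
      refine Matrix.posSemidef_diagonal_iff.mpr fun i => ?_
      have := hbound i
      have h1 : hB.eigenvalues i * hB.eigenvalues i ≤ 4 := by nlinarith [abs_le.mp this]
      simp [hg]; linarith
    have := hdiag.mul_mul_conjTranspose_same U
    simpa [Matrix.star_eq_conjTranspose] using this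
  have h := hPSD.dotProduct_mulVec_nonneg z
  have hstar : star z = z := by funext i; simp
  rw [hstar] at h
  have hexp : z ⬝ᵥ (((4:ℝ) • (1 : Matrix (Fin n) (Fin n) ℝ) - B * B) *ᵥ z)
      = 4 * (z ⬝ᵥ z) - (B *ᵥ z) ⬝ᵥ (B *ᵥ z) := by
    rw [Matrix.sub_mulVec, dotProduct_sub, Matrix.smul_mulVec, Matrix.one_mulVec]
    have h1 : z ⬝ᵥ (4:ℝ) • z = 4 * (z ⬝ᵥ z) := by
      rw [dotProduct_smul]; simp [smul_eq_mul]
    have h2 : z ⬝ᵥ ((B * B) *ᵥ z) = (B *ᵥ z) ⬝ᵥ (B *ᵥ z) := by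
      rw [← Matrix.mulVec_mulVec, Matrix.dotProduct_mulVec]
      have hBt : Bᵀ = B := by
        rw [← Matrix.conjTranspose_eq_transpose_of_trivial, hB.eq]
      congr 1
      rw [← hBt, Matrix.vecMul_transpose, hBt]
    rw [h1, h2]
  rw [hexp] at h
  linarith

lemma parity_aux (a b p q t : ℤ)
    (ha : a = -1 ∨ a = 0 ∨ a = 1) (hb : b = -1 ∨ b = 0 ∨ b = 1)
    (hp : p = 1 ∨ p = -1) (hq : q = 1 ∨ q = -1)
    (heq : a * p + b * q + 2 * t = 0) : a ≠ 0 ↔ b ≠ 0 := by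
  rcases hp with rfl | rfl <;> rcases hq with rfl | rfl <;>
    rcases ha with rfl | rfl | rfl <;> rcases hb with rfl | rfl | rfl <;> omega

/-- In a cyclotomic charged signed graph, two nonadjacent neutral
vertices `v, w` with a common charged neighbour `x` have the same neighbours. -/
theorem neutral_vertices_with_common_charged_neighbour_share_neighbours
    {n : ℕ} (A : Matrix (Fin n) (Fin n) ℤ) (hsymm : A.IsSymm)
    (hent : ∀ i j, A i j = -1 ∨ A i j = 0 ∨ A i j = 1)
    (hcyc : IsCyclo A)
    (v w x : Fin n) (hvw : v ≠ w) (hvx : v ≠ x) (hwx : w ≠ x)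
    (hv : A v v = 0) (hw : A w w = 0)
    (hnadj : A v w = 0)
    (hx : A x x ≠ 0)
    (hxv : A v x ≠ 0) (hxw : A w x ≠ 0) :
    ∀ y : Fin n, y ≠ v → y ≠ w → (A y v ≠ 0 ↔ A y w ≠ 0) := by
  intro y hyv hyw
  -- symmetry in entry form
  have hsA : ∀ i j, A i j = A j i := fun i j => hsymm.apply j i
  by_cases hyx : y = x
  · subst hyx
    rw [← hsA v y, ← hsA w y]
    exact ⟨fun _ => hxw, fun _ => hxv⟩
  -- set up real matrix
  set B : Matrix (Fin n) (Fin n) ℝ := A.map ((↑) : ℤ → ℝ) with hBdef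
  have hB : B.IsHermitian := by
    show Bᴴ = B
    ext i j
    simp [hBdef, Matrix.conjTranspose_apply, Matrix.map_apply, hsA i j]
  have hbound : ∀ i, |hB.eigenvalues i| ≤ 2 :=
    fun i => hcyc _ (hB.eigenvalues_mem_spectrum_real i)
  set ε : ℝ := ((A v x : ℤ) : ℝ) with hεdef
  set δ : ℝ := ((A w x : ℤ) : ℝ) with hδdef
  set c : ℝ := ((A x x : ℤ) : ℝ) with hcdef
  have hsq : ∀ m : ℤ, m ≠ 0 → (m = -1 ∨ m = 0 ∨ m = 1) → ((m:ℝ)) * ((m:ℝ)) = 1 := by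
    rintro m hm (h | h | h) <;> simp [h] at hm ⊢ <;> norm_num
  have hε2 : ε * ε = 1 := hsq _ hxv (hent v x)
  have hδ2 : δ * δ = 1 := hsq _ hxw (hent w x)
  have hc2 : c * c = 1 := hsq _ hx (hent x x)
  set z : Fin n → ℝ := fun j => if j = v then ε else if j = w then δ else if j = x then 2*c else 0
    with hzdef
  have hdot : ∀ g : Fin n → ℝ, g ⬝ᵥ z = g v * ε + g w * δ + g x * (2*c) := by
    intro g
    have hsub : ∑ j ∈ ({v, w, x} : Finset (Fin n)), g j * z j = ∑ j, g j * z j := by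
      refine Finset.sum_subset (Finset.subset_univ _) fun j _ hj => ?_
      simp only [Finset.mem_insert, Finset.mem_singleton, not_or] at hj
      simp [hzdef, hj.1, hj.2.1, hj.2.2]
    rw [dotProduct, ← hsub]
    rw [Finset.sum_insert (by simp [hvw, hvx]), Finset.sum_insert (by simp [hwx]),
      Finset.sum_singleton]
    simp only [hzdef, if_pos rfl, if_neg (Ne.symm hvw), if_neg (Ne.symm hvx),
      if_neg (Ne.symm hwx), if_true]
    ring
  have hu : ∀ i, (B *ᵥ z) i = (A i v : ℝ) * ε + (A i w : ℝ) * δ + (A i x : ℝ) * (2*c) := by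
    intro i
    have : (B *ᵥ z) i = (fun j => B i j) ⬝ᵥ z := rfl
    rw [this, hdot]
    simp [hBdef, Matrix.map_apply]
  have hzz : z ⬝ᵥ z = 6 := by
    rw [hdot]
    have h1 : z v = ε := by simp [hzdef]
    have h2 : z w = δ := by simp [hzdef, Ne.symm hvw]
    have h3 : z x = 2 * c := by simp [hzdef, Ne.symm hvx, Ne.symm hwx]
    rw [h1, h2, h3]
    nlinarith [hε2, hδ2, hc2]
  have hquad := cyclo_quad B hB hbound z
  rw [hzz] at hquad
  -- values of (B *ᵥ z) at v, w, x
  have huv : (B *ᵥ z) v = ε * (2*c) := by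
    rw [hu]; simp [hv, hnadj, hεdef]
  have huw : (B *ᵥ z) w = δ * (2*c) := by
    rw [hu]; rw [hsA w v]; simp [hw, hnadj, hδdef]
  have hux : (B *ᵥ z) x = 4 := by
    rw [hu, hsA x v, hsA x w]
    rw [← hεdef, ← hδdef, ← hcdef]
    nlinarith [hε2, hδ2, hc2]
  -- lower bound the quadratic form by the four special coordinates
  set u : Fin n → ℝ := B *ᵥ z with hudef
  have hsum : u ⬝ᵥ u = ∑ i, u i * u i := rfl
  have hsubset : ({y, v, w, x} : Finset (Fin n)) ⊆ Finset.univ := Finset.subset_univ _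
  have hlow : ∑ i ∈ ({y, v, w, x} : Finset (Fin n)), u i * u i ≤ ∑ i, u i * u i :=
    Finset.sum_le_sum_of_subset_of_nonneg hsubset fun i _ _ => mul_self_nonneg _
  have hexpand : ∑ i ∈ ({y, v, w, x} : Finset (Fin n)), u i * u i
      = u y * u y + (u v * u v + (u w * u w + u x * u x)) := by
    rw [Finset.sum_insert (by simp [hyv, hyw, hyx]), Finset.sum_insert (by simp [hvw, hvx]),
      Finset.sum_insert (by simp [hwx]), Finset.sum_singleton]
  have hval : u v * u v + (u w * u w + u x * u x) = 24 := by
    rw [huv, huw, hux]; nlinarith [hε2, hδ2, hc2]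
  have huy0 : u y = 0 := by
    have h1 : u y * u y ≤ 0 := by
      have := hsum ▸ hquad
      rw [hexpand, hval] at hlow
      linarith
    nlinarith [mul_self_nonneg (u y)]
  have heqR : (A y v : ℝ) * ε + (A y w : ℝ) * δ + (A y x : ℝ) * (2*c) = 0 := by
    rw [← hu y]; exact huy0
  have heq : A y v * A v x + A y w * A w x + 2 * (A y x * A x x) = 0 := by
    have : ((A y v * A v x + A y w * A w x + 2 * (A y x * A x x) : ℤ) : ℝ) = 0 := by
      push_cast
      rw [hεdef, hδdef, hcdef] at heqR
      push_cast at heqR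
      linarith
    exact_mod_cast this
  have hp : A v x = 1 ∨ A v x = -1 := by
    rcases hent v x with h | h | h
    · exact Or.inr h
    · exact absurd h hxv
    · exact Or.inl h
  have hq : A w x = 1 ∨ A w x = -1 := by
    rcases hent w x with h | h | h
    · exact Or.inr h
    · exact absurd h hxw
    · exact Or.inl h
  exact parity_aux _ _ _ _ _ (hent y v) (hent y w) hp hq heq
end

section
/- Let A be a cyclotomic charged signed graph containing two distinct adjacent charged vertices v and w whose charges have the same sign: A v w ≠ 0 and A v v = A w w ≠ 0. Then v and w have the same neighbours: for every vertex y with y ≠ v and y ≠ w, A y v ≠ 0 if and only if A y w ≠ 0. -/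
open Matrix

/-- In a cyclotomic charged signed graph, two adjacent charged
vertices whose charges have the same sign have the same neighbours. -/
theorem adjacent_like_charged_vertices_share_neighbours
    {n : ℕ} (A : Matrix (Fin n) (Fin n) ℤ) (hsymm : A.IsSymm)
    (hent : ∀ i j, A i j = -1 ∨ A i j = 0 ∨ A i j = 1)
    (hcyc : IsCyclo A)
    (v w : Fin n) (hvw : v ≠ w)
    (hadj : A v w ≠ 0)
    (hch : A v v = A w w) (hch0 : A v v ≠ 0) :
    ∀ y : Fin n, y ≠ v → y ≠ w → (A y v ≠ 0 ↔ A y w ≠ 0) := by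
  intro y hyv hyw
  set B : Matrix (Fin n) (Fin n) ℝ := A.map ((↑) : ℤ → ℝ) with hBdef
  have hBsym : ∀ i j, B j i = B i j := by
    intro i j
    simp only [hBdef, Matrix.map_apply]
    exact congrArg Int.cast (hsymm.apply i j)
  have hBh : B.IsHermitian := by
    ext i j
    simp only [Matrix.conjTranspose_apply, star_trivial]
    exact hBsym i j
  set c : ℤ := A v v with hcdef
  set ε : ℤ := A v w with hedef
  have hcc : c * c = 1 := by
    rcases hent v v with h | h | h
    · rw [hcdef, h]; norm_num
    · exact absurd h hch0
    · rw [hcdef, h]; norm_num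
  have hee : ε * ε = 1 := by
    rcases hent v w with h | h | h
    · rw [hedef, h]; norm_num
    · exact absurd h hadj
    · rw [hedef, h]; norm_num
  set M : Matrix (Fin n) (Fin n) ℝ := (2 : ℝ) • 1 - (c : ℝ) • B with hMdef
  -- M is positive semidefinite
  have hM : M.PosSemidef := by
    set U : Matrix (Fin n) (Fin n) ℝ := (hBh.eigenvectorUnitary : Matrix (Fin n) (Fin n) ℝ)
      with hUdef
    have hUU : U * star U = 1 := Matrix.mem_unitaryGroup_iff.mp hBh.eigenvectorUnitary.2
    have hg : ∀ i, 0 ≤ (2 : ℝ) - (c : ℝ) * hBh.eigenvalues i := by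
      intro i
      have h1 : |hBh.eigenvalues i| ≤ 2 := hcyc _ (hBh.eigenvalues_mem_spectrum_real i)
      have h2 : |(c : ℝ)| = 1 := by
        rcases hent v v with h | h | h
        · rw [hcdef, h]; norm_num
        · exact absurd h hch0
        · rw [hcdef, h]; norm_num
      nlinarith [abs_nonneg (hBh.eigenvalues i), le_abs_self ((c:ℝ) * hBh.eigenvalues i),
        abs_mul (c : ℝ) (hBh.eigenvalues i), le_abs_self (hBh.eigenvalues i),
        neg_abs_le (hBh.eigenvalues i)]
    have hkey : M = U * Matrix.diagonal (fun i => (2 : ℝ) - (c : ℝ) * hBh.eigenvalues i)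
        * star U := by
      have hd : Matrix.diagonal (fun i => (2 : ℝ) - (c : ℝ) * hBh.eigenvalues i)
          = (2 : ℝ) • 1 - (c : ℝ) • Matrix.diagonal (RCLike.ofReal ∘ hBh.eigenvalues) := by
        ext i j
        by_cases h : i = j <;> simp [Matrix.diagonal, Matrix.one_apply, h]
      rw [hd, Matrix.mul_sub, Matrix.sub_mul, hMdef]
      congr 1
      · rw [Matrix.mul_smul, Matrix.smul_mul, Matrix.mul_one, hUU]
      · rw [Matrix.mul_smul, Matrix.smul_mul]
        congr 1
        exact hBh.spectral_theorem
    rw [hkey, Matrix.star_eq_conjTranspose]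
    exact (Matrix.posSemidef_diagonal_iff.mpr hg).mul_mul_conjTranspose_same U
  -- the test vector
  set x : Fin n → ℝ := (Pi.single v 1 : Fin n → ℝ)
    + ((c : ℝ) * (ε : ℝ)) • (Pi.single w 1 : Fin n → ℝ) with hxdef
  have hMx : ∀ j, (M *ᵥ x) j = M j v + ((c : ℝ) * (ε : ℝ)) * M j w := by
    intro j
    simp [hxdef, Matrix.mulVec_add, Matrix.mulVec_smul, Matrix.mulVec_single,
      mul_comm]
  have hc1 : c = 1 ∨ c = -1 := by
    rcases hent v v with h | h | h
    · right; rw [hcdef, h]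
    · exact absurd h hch0
    · left; rw [hcdef, h]
  have he1 : ε = 1 ∨ ε = -1 := by
    rcases hent v w with h | h | h
    · right; rw [hedef, h]
    · exact absurd h hadj
    · left; rw [hedef, h]
  -- entries of M
  have hBvv : B v v = (c : ℝ) := by simp [hBdef, Matrix.map_apply, hcdef]
  have hBww : B w w = (c : ℝ) := by simp [hBdef, Matrix.map_apply, hch]
  have hBvw : B v w = (ε : ℝ) := by simp [hBdef, Matrix.map_apply, hedef]
  have hBwv : B w v = (ε : ℝ) := (hBsym v w).trans hBvw
  have hcc' : ((c : ℝ)) * (c : ℝ) = 1 := by exact_mod_cast hcc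
  have hee' : ((ε : ℝ)) * (ε : ℝ) = 1 := by exact_mod_cast hee
  have hMvv : M v v = 1 := by
    simp only [hMdef, Matrix.sub_apply, Matrix.smul_apply, Matrix.one_apply_eq,
      smul_eq_mul, hBvv, hcc']
    norm_num
  have hMww : M w w = 1 := by
    simp only [hMdef, Matrix.sub_apply, Matrix.smul_apply, Matrix.one_apply_eq,
      smul_eq_mul, hBww, hcc']
    norm_num
  have hMvw : M v w = -((c : ℝ) * (ε : ℝ)) := by
    simp only [hMdef, Matrix.sub_apply, Matrix.smul_apply, Matrix.one_apply_ne hvw,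
      smul_eq_mul, hBvw]
    ring
  have hMwv : M w v = -((c : ℝ) * (ε : ℝ)) := by
    simp only [hMdef, Matrix.sub_apply, Matrix.smul_apply, Matrix.one_apply_ne hvw.symm,
      smul_eq_mul, hBwv]
    ring
  -- quadratic form vanishes
  have hq : star x ⬝ᵥ M *ᵥ x = 0 := by
    have hsx : star x = x := by funext i; simp [hxdef]
    rw [hsx, hxdef]
    simp only [add_dotProduct, smul_dotProduct, single_dotProduct,
      smul_eq_mul, one_mul]
    rw [hMx v, hMx w, hMvv, hMww, hMvw, hMwv]
    nlinarith [hcc', hee']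
  have hMx0 : M *ᵥ x = 0 := (hM.dotProduct_mulVec_zero_iff x).mp hq
  have hy : M y v + ((c : ℝ) * (ε : ℝ)) * M y w = 0 := by
    rw [← hMx y, hMx0]; rfl
  have hMyv : M y v = -((c : ℝ)) * B y v := by
    simp only [hMdef, Matrix.sub_apply, Matrix.smul_apply, Matrix.one_apply_ne hyv,
      smul_eq_mul]
    ring
  have hMyw : M y w = -((c : ℝ)) * B y w := by
    simp only [hMdef, Matrix.sub_apply, Matrix.smul_apply, Matrix.one_apply_ne hyw,
      smul_eq_mul]
    ring
  rw [hMyv, hMyw] at hy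
  -- conclude
  have hrel : B y v = -((c : ℝ) * (ε : ℝ)) * B y w := by
    rcases hc1 with h | h <;> rcases he1 with h' | h' <;>
      rw [h] at hy ⊢ <;> rw [h'] at hy ⊢ <;> push_cast at hy ⊢ <;> linarith
  have hzero_iff : B y v = 0 ↔ B y w = 0 := by
    have hce : -((c : ℝ) * (ε : ℝ)) ≠ 0 := by
      rcases hc1 with h | h <;> rcases he1 with h' | h' <;> rw [h, h'] <;> norm_num
    constructor
    · intro h0
      rw [hrel] at h0
      exact (mul_eq_zero.mp h0).resolve_left hce
    · intro h0
      rw [hrel, h0, mul_zero]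
  have h1 : (A y v = 0) ↔ (A y w = 0) := by
    rw [← @Int.cast_eq_zero ℝ _ _ (A y v), ← @Int.cast_eq_zero ℝ _ _ (A y w)]
    exact hzero_iff
  exact not_congr h1
end

section
/- Let A be a connected cyclotomic charged signed graph with two distinct adjacent charged vertices v and w whose charges have the same sign: A v w ≠ 0 and A v v = A w w ≠ 0. Then the vertex w can be deleted without disconnecting the graph: the simple graph induced on the vertices other than w (with i ~ j iff i ≠ j and A i j ≠ 0) is still connected. -/
open Matrix Pointwise

lemma psd_helper {n : ℕ} (B : Matrix (Fin n) (Fin n) ℝ) (hB : B.IsHermitian)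
    (hspec : ∀ μ ∈ spectrum ℝ B, |μ| ≤ 2) :
    PosSemidef ((2:ℝ) • 1 - B) ∧ PosSemidef ((2:ℝ) • 1 + B) := by
  have h1 : ((2:ℝ) • (1 : Matrix (Fin n) (Fin n) ℝ)).IsHermitian := by
    simp [Matrix.IsHermitian, Matrix.conjTranspose_smul]
  have halg : (2:ℝ) • (1 : Matrix (Fin n) (Fin n) ℝ) = algebraMap ℝ _ 2 :=
    (Algebra.algebraMap_eq_smul_one 2).symm
  constructor
  · have hC : ((2:ℝ) • 1 - B).IsHermitian := h1.sub hB
    refine hC.posSemidef_iff_eigenvalues_nonneg.mpr (Pi.le_def.mpr fun i => (?_ : (0:ℝ) ≤ _))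
    have hm := hC.eigenvalues_mem_spectrum_real i
    have hs : spectrum ℝ ((2:ℝ) • 1 - B) = ({2} : Set ℝ) - spectrum ℝ B := by
      rw [halg, ← spectrum.singleton_sub_eq]
    rw [hs] at hm
    obtain ⟨a, ha, b, hb, hab⟩ := Set.mem_sub.mp hm
    rcases Set.mem_singleton_iff.mp ha with rfl
    have := abs_le.mp (hspec b hb)
    linarith [hab ▸ (by linarith [this.2] : (0:ℝ) ≤ 2 - b)]
  · have hC : ((2:ℝ) • 1 + B).IsHermitian := h1.add hB
    refine hC.posSemidef_iff_eigenvalues_nonneg.mpr (Pi.le_def.mpr fun i => (?_ : (0:ℝ) ≤ _))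
    have hm := hC.eigenvalues_mem_spectrum_real i
    have hs : spectrum ℝ ((2:ℝ) • 1 + B) = ({2} : Set ℝ) + spectrum ℝ B := by
      rw [halg, ← spectrum.singleton_add_eq]
    rw [hs] at hm
    obtain ⟨a, ha, b, hb, hab⟩ := Set.mem_add.mp hm
    rcases Set.mem_singleton_iff.mp ha with rfl
    have := abs_le.mp (hspec b hb)
    linarith [hab ▸ (by linarith [this.1] : (0:ℝ) ≤ 2 + b)]

lemma key_neighbors {n : ℕ} (A : Matrix (Fin n) (Fin n) ℤ) (hsymm : A.IsSymm)
    (hent : ∀ i j, A i j = -1 ∨ A i j = 0 ∨ A i j = 1)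
    (hcyc : ∀ μ ∈ spectrum ℝ (A.map ((↑) : ℤ → ℝ)), |μ| ≤ 2)
    (v w : Fin n) (hvw : v ≠ w) (hadj : A v w ≠ 0)
    (hch : A v v = A w w) (hch0 : A v v ≠ 0) :
    ∀ u, u ≠ v → u ≠ w → A u w ≠ 0 → A u v ≠ 0 := by
  set B : Matrix (Fin n) (Fin n) ℝ := A.map ((↑) : ℤ → ℝ) with hBdef
  have hB : B.IsHermitian := by
    ext i j
    simp only [hBdef, conjTranspose_apply, Matrix.map_apply, star_trivial]
    exact_mod_cast congrArg (Int.cast : ℤ → ℝ) (hsymm.apply i j)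
  obtain ⟨c, hcdef⟩ : ∃ c : ℤ, A v v = c := ⟨_, rfl⟩
  obtain ⟨a, hadef⟩ : ∃ a : ℤ, A v w = a := ⟨_, rfl⟩
  rw [hcdef] at hch0 hch
  rw [hadef] at hadj
  have hc : c = 1 ∨ c = -1 := by
    rcases hent v v with h | h | h <;> rw [hcdef] at h <;> simp_all
  have ha1 : a = 1 ∨ a = -1 := by
    rcases hent v w with h | h | h <;> rw [hadef] at h <;> simp_all
  obtain ⟨s, hsdef⟩ : ∃ s : ℤ, c * a = s := ⟨_, rfl⟩
  have hs2 : s * s = 1 := by rcases hc with h | h <;> rcases ha1 with h' | h' <;> rw [← hsdef] <;> simp [h, h']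
  have hsa : s * a = c := by rcases hc with h | h <;> rcases ha1 with h' | h' <;> rw [← hsdef] <;> simp [h, h']
  have hs0 : s ≠ 0 := by rcases hc with h | h <;> rcases ha1 with h' | h' <;> rw [← hsdef] <;> simp [h, h']
  set x : Fin n → ℝ := (Pi.single v 1 : Fin n → ℝ) + (s:ℝ) • (Pi.single w 1 : Fin n → ℝ) with hxdef
  have hxv : x v = 1 := by simp [hxdef, Pi.single_eq_of_ne hvw]
  have hxw : x w = (s:ℝ) := by simp [hxdef, Pi.single_eq_of_ne (Ne.symm hvw)]
  have hxu : ∀ u, u ≠ v → u ≠ w → x u = 0 := by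
    intro u hu1 hu2
    simp [hxdef, Pi.single_eq_of_ne hu1, Pi.single_eq_of_ne hu2]
  have hstar : star x = x := by funext u; exact star_trivial _
  have hdot : ∀ y : Fin n → ℝ, x ⬝ᵥ y = y v + (s:ℝ) * y w := by
    intro y
    simp [hxdef, add_dotProduct, smul_dotProduct, single_dotProduct, smul_eq_mul]
  have hmul : ∀ u, (B *ᵥ x) u = B u v + (s:ℝ) * B u w := by
    intro u
    simp [hxdef, mulVec_add, mulVec_smul, smul_eq_mul]
  have hBsymm : ∀ i j, B i j = B j i := fun i j => by
    simp only [hBdef, Matrix.map_apply]; exact_mod_cast congrArg (Int.cast : ℤ → ℝ) (hsymm.apply j i)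
  have hBvv : B v v = (c:ℝ) := by simp [hBdef, Matrix.map_apply, hcdef]
  have hBvw : B v w = (a:ℝ) := by simp [hBdef, Matrix.map_apply, hadef]
  have hBwv : B w v = (a:ℝ) := by rw [hBsymm w v, hBvw]
  have hBww : B w w = (c:ℝ) := by
    simp only [hBdef, Matrix.map_apply]; exact_mod_cast congrArg (Int.cast : ℤ → ℝ) hch.symm
  have hxx : x ⬝ᵥ x = 2 := by
    rw [hdot x, hxv, hxw]
    have : ((s:ℝ) * s) = 1 := by exact_mod_cast congrArg (Int.cast : ℤ → ℝ) hs2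
    linarith
  have hq : x ⬝ᵥ (B *ᵥ x) = 4 * (c:ℝ) := by
    rw [hdot, hmul, hmul, hBvv, hBvw, hBwv, hBww]
    have h1 : ((s:ℝ) * a) = (c:ℝ) := by exact_mod_cast congrArg (Int.cast : ℤ → ℝ) hsa
    have h2 : ((s:ℝ) * s) = 1 := by exact_mod_cast congrArg (Int.cast : ℤ → ℝ) hs2
    linear_combination 2*h1 + (c:ℝ)*h2
  -- main equation
  have hkey : ∀ u, u ≠ v → u ≠ w → (A u v : ℝ) + (s:ℝ) * (A u w : ℝ) = 0 := by
    have hpsd := psd_helper B hB hcyc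
    rcases hc with hc1 | hc1
    · have hz : ((2:ℝ) • 1 - B) *ᵥ x = 0 := by
        refine (hpsd.1.dotProduct_mulVec_zero_iff x).mp ?_
        rw [hstar, sub_mulVec, smul_mulVec, one_mulVec, dotProduct_sub, dotProduct_smul,
          hxx, hq, hc1]
        norm_num
      intro u hu1 hu2
      have := congrFun hz u
      rw [sub_mulVec, smul_mulVec, one_mulVec] at this
      have h2 := hmul u
      simp only [Pi.sub_apply, Pi.smul_apply, smul_eq_mul, Pi.zero_apply] at this
      rw [h2, hxu u hu1 hu2] at this
      simp only [hBdef, Matrix.map_apply] at this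
      linarith
    · have hz : ((2:ℝ) • 1 + B) *ᵥ x = 0 := by
        refine (hpsd.2.dotProduct_mulVec_zero_iff x).mp ?_
        rw [hstar, add_mulVec, smul_mulVec, one_mulVec, dotProduct_add, dotProduct_smul,
          hxx, hq, hc1]
        norm_num
      intro u hu1 hu2
      have := congrFun hz u
      rw [add_mulVec, smul_mulVec, one_mulVec] at this
      have h2 := hmul u
      simp only [Pi.add_apply, Pi.smul_apply, smul_eq_mul, Pi.zero_apply] at this
      rw [h2, hxu u hu1 hu2] at this
      simp only [hBdef, Matrix.map_apply] at this
      linarith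
  intro u hu1 hu2 hw
  have := hkey u hu1 hu2
  have hz : (A u v : ℝ) = -((s:ℝ) * (A u w : ℝ)) := by linarith
  have hzz : (A u v : ℤ) = -(s * A u w) := by exact_mod_cast hz
  intro h0
  rw [h0] at hzz
  have : s * A u w = 0 := by linarith
  rcases mul_eq_zero.mp this with h | h
  · exact hs0 h
  · exact hw h


/-- In a connected cyclotomic charged signed graph with two adjacent
charged vertices `v, w` of the same charge, the vertex `w` can be deleted without
disconnecting the graph. -/
theorem delete_like_charged_vertex_keeps_connected
    {n : ℕ} (A : Matrix (Fin n) (Fin n) ℤ) (hsymm : A.IsSymm)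
    (hent : ∀ i j, A i j = -1 ∨ A i j = 0 ∨ A i j = 1)
    (hcyc : IsCyclo A)
    (hconn : (SimpleGraph.fromRel (fun i j => A i j ≠ 0)).Connected)
    (v w : Fin n) (hvw : v ≠ w)
    (hadj : A v w ≠ 0)
    (hch : A v v = A w w) (hch0 : A v v ≠ 0) :
    (SimpleGraph.induce {i : Fin n | i ≠ w}
      (SimpleGraph.fromRel (fun i j => A i j ≠ 0))).Connected := by
  have hkey : ∀ u, u ≠ v → u ≠ w → A u w ≠ 0 → A u v ≠ 0 :=
    key_neighbors A hsymm hent hcyc v w hvw hadj hch hch0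
  set G := SimpleGraph.fromRel (fun i j => A i j ≠ 0) with hG
  set S : Set (Fin n) := {i : Fin n | i ≠ w} with hS
  have hvS : v ∈ S := hvw
  -- symmetrize the relation
  have hsym' : ∀ i j, A i j ≠ 0 → A j i ≠ 0 := by
    intro i j h
    rw [hsymm.apply i j]; exact h
  have hGadj : ∀ i j, G.Adj i j ↔ i ≠ j ∧ A i j ≠ 0 := by
    intro i j
    rw [hG, SimpleGraph.fromRel_adj]
    constructor
    · rintro ⟨hne, h | h⟩
      · exact ⟨hne, h⟩
      · exact ⟨hne, hsym' j i h⟩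
    · rintro ⟨hne, h⟩; exact ⟨hne, Or.inl h⟩
  set f : Fin n → S := fun u => if h : u = w then ⟨v, hvS⟩ else ⟨u, h⟩ with hf
  have hfne : ∀ u (h : u ≠ w), f u = ⟨u, h⟩ := by
    intro u h; simp [hf, h]
  have hfw : f w = ⟨v, hvS⟩ := by simp [hf]
  have hstep : ∀ a b, G.Adj a b → (SimpleGraph.induce S G).Reachable (f a) (f b) := by
    have hcase : ∀ a b, G.Adj a b → b = w → (SimpleGraph.induce S G).Reachable (f a) (f b) := by
      intro a b hab hbw
      obtain ⟨hne, hA⟩ := (hGadj a b).mp hab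
      rw [hbw] at hne hA
      rw [hbw, hfw]
      by_cases hav : a = v
      · subst hav; rw [hfne a hne]
      · rw [hfne a hne]
        have hAav : A a v ≠ 0 := hkey a hav hne hA
        refine SimpleGraph.Adj.reachable ?_
        show G.Adj a v
        exact (hGadj a v).mpr ⟨hav, hAav⟩
    intro a b hab
    by_cases hbw : b = w
    · exact hcase a b hab hbw
    by_cases haw : a = w
    · exact (hcase b a hab.symm haw).symm
    · obtain ⟨hne, hA⟩ := (hGadj a b).mp hab
      rw [hfne a haw, hfne b hbw]
      refine SimpleGraph.Adj.reachable ?_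
      show G.Adj a b
      exact (hGadj a b).mpr ⟨hne, hA⟩
  have hreach : ∀ a b, G.Reachable a b → (SimpleGraph.induce S G).Reachable (f a) (f b) := by
    intro a b hab
    obtain ⟨p⟩ := hab
    induction p with
    | nil => rfl
    | cons h _ ih => exact (hstep _ _ h).trans ih
  haveI : Nonempty S := ⟨⟨v, hvS⟩⟩
  constructor
  intro a b
  have := hreach a.1 b.1 (hconn.preconnected a.1 b.1)
  rwa [hfne a.1 a.2, hfne b.1 b.2, Subtype.coe_eta, Subtype.coe_eta] at this
end
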